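/- arXiv:1512.09033 — 10 statements merged into one kernel-verified Lean document; each statement's English description precedes it below -/
import Mathlib

section
/- Let (u_n)_{n≥1} be a sequence of positive integers tending to infinity with n, let k be a positive integer, and let t be a nonzero integer. Then the series ∑_{n=1}^∞ (-1)^{u_n} · F_{u_{n+k} - u_n} / (F_{u_n} · F_{u_{n+k}}) converges and equals (1/F_t) · ( ∑_{n=1}^{k} F_{u_n + t}/F_{u_n} − k·Φ^t ). -/
open Filter Finset Topology

/-- The golden ratio `Φ = (1 + √5)/2`. -/
noncomputable def Phi : ℝ := (1 + Real.sqrt 5) / 2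

/-- The Fibonacci sequence extended to all integer indices via
`F_{-n} = (-1)^(n+1) F_n`. -/
def fibZ (n : ℤ) : ℤ :=
  if 0 ≤ n then (Nat.fib n.toNat : ℤ) else (-1) ^ (n.natAbs + 1) * (Nat.fib n.natAbs : ℤ)

section Aux

open Real goldenRatio

lemma fibZ_natCast (n : ℕ) : fibZ (n : ℤ) = (Nat.fib n : ℤ) := by
  simp [fibZ]

lemma binetZ (n : ℤ) : (fibZ n : ℝ) = (φ ^ n - ψ ^ n) / √5 := by
  rcases n with m | m
  · rw [Int.ofNat_eq_coe, fibZ_natCast, zpow_natCast, zpow_natCast]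
    push_cast
    exact Real.coe_fib_eq m
  · have hcast : (Int.negSucc m) = -(((m + 1 : ℕ) : ℤ)) := by
      rw [Int.negSucc_eq]; push_cast; ring
    have h1 : (φ : ℝ) ^ (Int.negSucc m) = (-1 : ℝ) ^ (m + 1) * ψ ^ (m + 1) := by
      rw [hcast, zpow_neg, zpow_natCast, ← inv_pow, inv_goldenRatio, neg_pow]
    have h2 : (ψ : ℝ) ^ (Int.negSucc m) = (-1 : ℝ) ^ (m + 1) * φ ^ (m + 1) := by
      rw [hcast, zpow_neg, zpow_natCast, ← inv_pow, inv_goldenConj, neg_pow]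
    have h3 : fibZ (Int.negSucc m) = (-1 : ℤ) ^ (m + 2) * (Nat.fib (m + 1) : ℤ) := by
      simp [fibZ, Int.natAbs_negSucc]
    rw [h3, h1, h2]
    push_cast
    have := Real.coe_fib_eq (m + 1)
    push_cast at this
    rw [this]
    ring
  
lemma vajda_key (A A' B B' T T' s : ℝ) (hA : A ≠ 0) (hA' : A' ≠ 0) (hs : s ≠ 0) :
    (A * T - A' * T') / s * ((B - B') / s) - (A - A') / s * ((B * T - B' * T') / s)
      = A * A' * ((T - T') / s) * ((B / A - B' / A') / s) := by
  field_simp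
  ring

lemma vajda (a b t : ℤ) :
    (fibZ (a + t) : ℝ) * (fibZ b : ℝ) - (fibZ a : ℝ) * (fibZ (b + t) : ℝ)
      = (-1 : ℝ) ^ a * (fibZ t : ℝ) * (fibZ (b - a) : ℝ) := by
  have hφ : (φ : ℝ) ≠ 0 := goldenRatio_ne_zero
  have hψ : (ψ : ℝ) ≠ 0 := goldenConj_ne_zero
  have h5 : (√5 : ℝ) ≠ 0 := by positivity
  have hneg : (-1 : ℝ) ^ a = φ ^ a * ψ ^ a := by
    rw [← mul_zpow, goldenRatio_mul_goldenConj]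
  rw [binetZ, binetZ, binetZ, binetZ, binetZ, binetZ, hneg,
    zpow_add₀ hφ, zpow_add₀ hψ, zpow_add₀ hφ, zpow_add₀ hψ,
    zpow_sub₀ hφ, zpow_sub₀ hψ]
  have ha : (φ : ℝ) ^ a ≠ 0 := zpow_ne_zero _ hφ
  have ha' : (ψ : ℝ) ^ a ≠ 0 := zpow_ne_zero _ hψ
  linear_combination vajda_key (φ ^ a) (ψ ^ a) (φ ^ b) (ψ ^ b) (φ ^ t) (ψ ^ t) √5 ha ha' h5

lemma fibZ_real_ne_zero {t : ℤ} (ht : t ≠ 0) : (fibZ t : ℝ) ≠ 0 := by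
  have : fibZ t ≠ 0 := by
    rcases le_or_gt 0 t with h | h
    · simp only [fibZ, if_pos h]
      have : 0 < t.toNat := by omega
      simpa [Nat.fib_pos] using this
    · simp only [fibZ, if_neg (not_le.mpr h)]
      have h1 : 0 < t.natAbs := by omega
      have := Nat.fib_pos.mpr h1
      intro hc
      rcases mul_eq_zero.mp hc with h' | h'
      · exact absurd h' (pow_ne_zero _ (by norm_num))
      · simp at h'; omega
  exact_mod_cast this

lemma term_eq (a b : ℕ) (ha : a ≠ 0) (hb : b ≠ 0) (t : ℤ) (htF : (fibZ t : ℝ) ≠ 0) :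
    (-1 : ℝ) ^ a * ((fibZ ((b : ℤ) - (a : ℤ)) : ℝ) / ((Nat.fib a : ℝ) * (Nat.fib b : ℝ)))
      = (1 / (fibZ t : ℝ)) *
        ((fibZ ((a : ℤ) + t) : ℝ) / (Nat.fib a : ℝ) - (fibZ ((b : ℤ) + t) : ℝ) / (Nat.fib b : ℝ)) := by
  have hv := vajda (a : ℤ) (b : ℤ) t
  have hca : (fibZ (a : ℤ) : ℝ) = (Nat.fib a : ℝ) := by rw [fibZ_natCast]; push_cast; ring
  have hcb : (fibZ (b : ℤ) : ℝ) = (Nat.fib b : ℝ) := by rw [fibZ_natCast]; push_cast; ring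
  rw [hca, hcb] at hv
  have h1 : (-1 : ℝ) ^ ((a : ℤ)) = (-1 : ℝ) ^ a := zpow_natCast _ _
  rw [h1] at hv
  have hfa : (Nat.fib a : ℝ) ≠ 0 := by
    exact_mod_cast (Nat.fib_pos.mpr (Nat.pos_of_ne_zero ha)).ne'
  have hfb : (Nat.fib b : ℝ) ≠ 0 := by
    exact_mod_cast (Nat.fib_pos.mpr (Nat.pos_of_ne_zero hb)).ne'
  field_simp
  linear_combination (-1 : ℝ) * hv

lemma tele (f : ℕ → ℝ) (k : ℕ) : ∀ N, k ≤ N →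
    ∑ n ∈ range N, (f n - f (n + k)) = ∑ n ∈ range k, f n - ∑ n ∈ range k, f (N + n) := by
  intro N hN
  induction N, hN using Nat.le_induction with
  | base =>
    rw [Finset.sum_sub_distrib]
    congr 1
    exact Finset.sum_congr rfl fun n _ => by rw [Nat.add_comm]
  | succ N hN ih =>
    rw [Finset.sum_range_succ, ih]
    have h1 := Finset.sum_range_succ' (fun n => f (N + n)) k
    have h2 := Finset.sum_range_succ (fun n => f (N + n)) k
    have h3 : ∑ n ∈ range k, f (N + 1 + n) = ∑ n ∈ range k, f (N + (n + 1)) :=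
      Finset.sum_congr rfl fun n _ => by congr 1; omega
    simp only [Nat.add_zero] at h1 h2
    rw [h3]
    linarith [h1, h2]

lemma fib_ratio_tendsto (t : ℤ) :
    Tendsto (fun m : ℕ => (fibZ ((m : ℤ) + t) : ℝ) / (Nat.fib m : ℝ)) atTop (𝓝 (φ ^ t)) := by
  have hφ : (0 : ℝ) < φ := goldenRatio_pos
  have hφ' : (φ : ℝ) ≠ 0 := goldenRatio_pos.ne'
  have hr : |ψ / φ| < 1 := by
    rw [abs_div, abs_of_pos hφ, div_lt_one hφ, abs_of_neg goldenConj_neg]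
    linarith [neg_one_lt_goldenConj, one_lt_goldenRatio]
  have hrt : Tendsto (fun m : ℕ => (ψ / φ) ^ m) atTop (𝓝 0) :=
    tendsto_pow_atTop_nhds_zero_of_abs_lt_one hr
  have hlim : Tendsto (fun m : ℕ => (φ ^ t - ψ ^ t * (ψ / φ) ^ m) / (1 - (ψ / φ) ^ m))
      atTop (𝓝 (φ ^ t)) := by
    have := ((tendsto_const_nhds (x := (φ:ℝ) ^ t)).sub
        ((tendsto_const_nhds (x := (ψ:ℝ) ^ t)).mul hrt)).div
      ((tendsto_const_nhds (x := (1:ℝ))).sub hrt) (by norm_num)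
    simp only [mul_zero, sub_zero, div_one] at this
    exact this
  refine hlim.congr' ?_
  filter_upwards [eventually_ge_atTop 1] with m hm
  have hψ' : (ψ : ℝ) ≠ 0 := goldenConj_ne_zero
  have h5 : (√5 : ℝ) ≠ 0 := by positivity
  have hfm : (Nat.fib m : ℝ) ≠ 0 := by
    exact_mod_cast (Nat.fib_pos.mpr hm).ne'
  have hne : (φ : ℝ) ^ m - ψ ^ m ≠ 0 := by
    intro hc
    apply hfm
    rw [Real.coe_fib_eq, hc, zero_div]
  have hpm : (φ : ℝ) ^ m ≠ 0 := pow_ne_zero _ hφ'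
  have hd : (1 : ℝ) - (ψ / φ) ^ m ≠ 0 := by
    have : (1 : ℝ) - (ψ / φ) ^ m = (φ ^ m - ψ ^ m) / φ ^ m := by
      rw [div_pow]; field_simp
    rw [this]
    exact div_ne_zero hne hpm
  rw [binetZ, Real.coe_fib_eq, zpow_add₀ hφ', zpow_add₀ hψ', zpow_natCast, zpow_natCast,
    div_pow]
  rw [div_pow] at hd
  rw [div_eq_div_iff hd (div_ne_zero hne h5)]
  field_simp

end Aux

/-- Let `(u_n)_{n≥1}` be a sequence of positive integers tending to
infinity, `k ≥ 1` and `t ∈ ℤ*`. Then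
`∑_{n=1}^∞ (-1)^{u_n} F_{u_{n+k} - u_n} / (F_{u_n} F_{u_{n+k}})`
converges and equals `(1/F_t) (∑_{n=1}^k F_{u_n + t}/F_{u_n} - k Φ^t)`. -/
theorem statement0 (u : ℕ → ℕ) (hupos : ∀ n, 1 ≤ n → 1 ≤ u n)
    (hutend : Tendsto u atTop atTop) (k : ℕ) (hk : 1 ≤ k) (t : ℤ) (ht : t ≠ 0) :
    Tendsto (fun N => ∑ n ∈ Finset.range N,
        (-1 : ℝ) ^ (u (n + 1)) *
          ((fibZ ((u (n + k + 1) : ℤ) - (u (n + 1) : ℤ)) : ℝ) /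
            ((Nat.fib (u (n + 1)) : ℝ) * (Nat.fib (u (n + k + 1)) : ℝ))))
      atTop
      (𝓝 ((1 / (fibZ t : ℝ)) *
        ((∑ n ∈ Finset.range k,
            (fibZ ((u (n + 1) : ℤ) + t) : ℝ) / (Nat.fib (u (n + 1)) : ℝ)) -
          (k : ℝ) * Phi ^ t))) := by
  have htF : (fibZ t : ℝ) ≠ 0 := fibZ_real_ne_zero ht
  set F : ℕ → ℝ := fun n => (fibZ ((u (n + 1) : ℤ) + t) : ℝ) / (Nat.fib (u (n + 1)) : ℝ) with hF
  have hterm : ∀ n : ℕ,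
      (-1 : ℝ) ^ (u (n + 1)) *
          ((fibZ ((u (n + k + 1) : ℤ) - (u (n + 1) : ℤ)) : ℝ) /
            ((Nat.fib (u (n + 1)) : ℝ) * (Nat.fib (u (n + k + 1)) : ℝ)))
        = (1 / (fibZ t : ℝ)) * (F n - F (n + k)) := by
    intro n
    have ha : u (n + 1) ≠ 0 := Nat.one_le_iff_ne_zero.mp (hupos _ (by omega))
    have hb : u (n + k + 1) ≠ 0 := Nat.one_le_iff_ne_zero.mp (hupos _ (by omega))
    have := term_eq (u (n + 1)) (u (n + k + 1)) ha hb t htF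
    simpa [hF] using this
  have hFlim : Tendsto F atTop (𝓝 (Phi ^ t)) := by
    have h1 : Tendsto (fun n : ℕ => u (n + 1)) atTop atTop :=
      hutend.comp (tendsto_add_atTop_nat 1)
    have := (fib_ratio_tendsto t).comp h1
    exact this
  have hsum : Tendsto (fun N => ∑ n ∈ range k, F (N + n)) atTop (𝓝 ((k : ℝ) * Phi ^ t)) := by
    have h1 : Tendsto (fun N => ∑ n ∈ range k, F (N + n)) atTop
        (𝓝 (∑ _n ∈ range k, Phi ^ t)) := by
      apply tendsto_finset_sum
      intro j _
      exact hFlim.comp (tendsto_add_atTop_nat j)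
    simpa [Finset.sum_const, nsmul_eq_mul] using h1
  have hmain : Tendsto (fun N => (1 / (fibZ t : ℝ)) *
      ((∑ n ∈ range k, F n) - ∑ n ∈ range k, F (N + n))) atTop
      (𝓝 ((1 / (fibZ t : ℝ)) * ((∑ n ∈ range k, F n) - (k : ℝ) * Phi ^ t))) :=
    (tendsto_const_nhds.sub hsum).const_mul _
  refine hmain.congr' ?_
  filter_upwards [eventually_ge_atTop k] with N hN
  rw [← tele F k N hN, Finset.mul_sum]
  exact (Finset.sum_congr rfl fun n _ => (hterm n).symm)
end

section
/- Let (u_n)_{n≥1} be an increasing arithmetic sequence of positive integers with common difference r ≥ 1. Then for any positive integer k: ∑_{n=1}^∞ (-1)^{r(n-1)} / (F_{u_n} · F_{u_{n+k}}) = ((-1)^{u_1} / F_{kr}) · ( ∑_{n=1}^{k} F_{u_n + 1}/F_{u_n} − k·Φ ). -/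
open Filter Finset Topology

open goldenRatio in
lemma aux_fib_key (a c : ℕ) :
    (Nat.fib (a + c) * Nat.fib (a + 1) : ℤ) - Nat.fib (a + c + 1) * Nat.fib a
      = (-1) ^ a * Nat.fib c := by
  induction a with
  | zero => simp
  | succ n ih =>
    have e1 : n + 1 + c = n + c + 1 := by omega
    have e2 : n + 1 + c + 1 = n + c + 2 := by omega
    rw [e2, e1]
    have f1 : (Nat.fib (n + c + 2) : ℤ) = Nat.fib (n + c) + Nat.fib (n + c + 1) := by
      rw [Nat.fib_add_two]; push_cast; ring
    have f2 : (Nat.fib (n + 1 + 1) : ℤ) = Nat.fib n + Nat.fib (n + 1) := by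
      rw [Nat.fib_add_two]; push_cast; ring
    rw [f1, f2]
    linear_combination -ih

lemma aux_fib_prod_ge (n : ℕ) : 2 ^ n ≤ Nat.fib (n + 1) * Nat.fib (n + 2) := by
  induction n with
  | zero => simp
  | succ n ih =>
    have h1 : Nat.fib (n + 1) ≤ Nat.fib (n + 2) := Nat.fib_mono (Nat.le_succ _)
    have h3 : Nat.fib (n + 3) = Nat.fib (n + 1) + Nat.fib (n + 2) := Nat.fib_add_two
    have : 2 ^ (n + 1) = 2 * 2 ^ n := by ring
    rw [this]
    calc 2 * 2 ^ n ≤ 2 * (Nat.fib (n + 1) * Nat.fib (n + 2)) := by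
          exact Nat.mul_le_mul_left 2 ih
      _ ≤ Nat.fib (n + 2) * Nat.fib (n + 3) := by rw [h3]; nlinarith
      _ = Nat.fib (n + 1 + 1) * Nat.fib (n + 1 + 2) := by ring_nf

lemma aux_telescope (f : ℕ → ℝ) (k : ℕ) (N : ℕ) :
    ∑ n ∈ Finset.range N, (f n - f (n + k)) =
      ∑ n ∈ Finset.range k, f n - ∑ n ∈ Finset.range k, f (N + n) := by
  induction N with
  | zero => simp
  | succ N ih =>
    rw [Finset.sum_range_succ, ih]
    have e1 := Finset.sum_range_succ' (fun i => f (N + i)) k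
    have e2 := Finset.sum_range_succ (fun i => f (N + i)) k
    have h : ∑ n ∈ Finset.range k, f (N + 1 + n) = ∑ n ∈ Finset.range k, f (N + (n + 1)) :=
      Finset.sum_congr rfl (fun i _ => congrArg f (by omega))
    rw [h]
    simp only [Nat.add_zero] at e1 e2
    linarith [e1, e2]

open Real goldenRatio in
lemma aux_fib_ratio_tendsto :
    Tendsto (fun m : ℕ => (Nat.fib (m + 1) : ℝ) / Nat.fib m) atTop (𝓝 goldenRatio) := by
  have h : ∀ m : ℕ, 1 ≤ m →
      (Nat.fib (m + 1) : ℝ) / Nat.fib m = goldenRatio + goldenConj ^ m / Nat.fib m := by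
    intro m hm
    have hf : (0 : ℝ) < Nat.fib m := by exact_mod_cast Nat.fib_pos.2 hm
    have hb : (Nat.fib (m + 1) : ℝ) = goldenRatio * Nat.fib m + goldenConj ^ m := by
      linear_combination fib_succ_sub_goldenRatio_mul_fib m
    rw [hb, add_div, mul_div_assoc, div_self hf.ne', mul_one]
  have habs : |goldenConj| < 1 := abs_lt.2 ⟨neg_one_lt_goldenConj, by linarith [goldenConj_neg]⟩
  have h0 : Tendsto (fun m : ℕ => goldenConj ^ m / (Nat.fib m : ℝ)) atTop (𝓝 0) := by
    refine squeeze_zero_norm' (a := fun m => |goldenConj| ^ m) ?_ ?_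
    · filter_upwards [eventually_ge_atTop 1] with m hm
      have hf : (1 : ℝ) ≤ Nat.fib m := by exact_mod_cast Nat.fib_pos.2 hm
      rw [Real.norm_eq_abs, abs_div, abs_pow]
      have hd : |(Nat.fib m : ℝ)| = (Nat.fib m : ℝ) := abs_of_pos (by linarith)
      rw [hd]
      calc |goldenConj| ^ m / (Nat.fib m : ℝ) ≤ |goldenConj| ^ m / 1 := by
            apply div_le_div_of_nonneg_left (pow_nonneg (abs_nonneg _) m) one_pos hf
        _ = |goldenConj| ^ m := by rw [div_one]
    · exact tendsto_pow_atTop_nhds_zero_of_lt_one (abs_nonneg _) habs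
  have h2 : Tendsto (fun m : ℕ => goldenRatio + goldenConj ^ m / (Nat.fib m : ℝ))
      atTop (𝓝 goldenRatio) := by
    simpa using tendsto_const_nhds.add h0
  apply h2.congr'
  filter_upwards [eventually_ge_atTop 1] with m hm
  exact (h m hm).symm

/-- Let `(u_n)_{n≥1}` be an increasing arithmetic sequence of positive
integers with common difference `r ≥ 1`. Then for any positive integer `k`:
`∑_{n=1}^∞ (-1)^{r(n-1)} / (F_{u_n} F_{u_{n+k}})
= ((-1)^{u_1} / F_{kr}) (∑_{n=1}^k F_{u_n + 1}/F_{u_n} - k Φ)`. -/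
theorem statement3 (u : ℕ → ℕ) (r : ℕ) (hr : 1 ≤ r) (hu1 : 1 ≤ u 1)
    (harith : ∀ n, 1 ≤ n → u (n + 1) = u n + r) (k : ℕ) (hk : 1 ≤ k) :
    ∑' n : ℕ, (-1 : ℝ) ^ (r * n) /
        ((Nat.fib (u (n + 1)) : ℝ) * (Nat.fib (u (n + 1 + k)) : ℝ)) =
      ((-1 : ℝ) ^ (u 1) / (Nat.fib (k * r) : ℝ)) *
        ((∑ n ∈ Finset.range k,
            (Nat.fib (u (n + 1) + 1) : ℝ) / (Nat.fib (u (n + 1)) : ℝ)) -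
          (k : ℝ) * Phi) := by
  have hu : ∀ n : ℕ, u (n + 1) = u 1 + n * r := by
    intro n
    induction n with
    | zero => simp
    | succ n ih =>
      rw [harith (n + 1) (by omega), ih]; ring
  have hupos : ∀ n : ℕ, 1 ≤ u (n + 1) := fun n => by rw [hu]; omega
  have hfibpos : ∀ n : ℕ, (0 : ℝ) < Nat.fib (u (n + 1)) := fun n => by
    exact_mod_cast Nat.fib_pos.2 (hupos n)
  have hkr : 1 ≤ k * r := Nat.one_le_iff_ne_zero.2 (by positivity)
  have hfkr : (0 : ℝ) < Nat.fib (k * r) := by exact_mod_cast Nat.fib_pos.2 hkr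
  set T : ℕ → ℝ := fun n => (-1 : ℝ) ^ (r * n) /
      ((Nat.fib (u (n + 1)) : ℝ) * (Nat.fib (u (n + 1 + k)) : ℝ)) with hT
  set c : ℝ := (-1 : ℝ) ^ (u 1) / (Nat.fib (k * r) : ℝ) with hc
  set f : ℕ → ℝ := fun n => (Nat.fib (u (n + 1) + 1) : ℝ) / Nat.fib (u (n + 1)) with hf
  have hidx : ∀ n : ℕ, u (n + 1 + k) = u (n + 1) + k * r := by
    intro n
    rw [show n + 1 + k = (n + k) + 1 by omega, hu (n + k), hu n, add_mul]; ring
  -- term identity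
  have hterm : ∀ n : ℕ, T n = c * (f n - f (n + k)) := by
    intro n
    have hfa : (0 : ℝ) < Nat.fib (u (n + 1)) := hfibpos n
    have hfb : (0 : ℝ) < Nat.fib (u (n + 1) + k * r) := by
      have : 1 ≤ u (n + 1) + k * r := by omega
      exact_mod_cast Nat.fib_pos.2 this
    have key : ((Nat.fib (u (n + 1) + k * r) : ℝ) * Nat.fib (u (n + 1) + 1)) -
        (Nat.fib (u (n + 1) + k * r + 1) : ℝ) * Nat.fib (u (n + 1))
          = (-1) ^ (u (n + 1)) * Nat.fib (k * r) := by
      exact_mod_cast aux_fib_key (u (n + 1)) (k * r)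
    have hfk : f (n + k) = (Nat.fib (u (n + 1) + k * r + 1) : ℝ) /
        Nat.fib (u (n + 1) + k * r) := by
      simp only [hf]
      rw [show n + k + 1 = n + 1 + k by omega, hidx n]
    have hsign : (-1 : ℝ) ^ (u 1) * (-1 : ℝ) ^ (u (n + 1)) = (-1 : ℝ) ^ (r * n) := by
      rw [hu n, ← pow_add, show u 1 + (u 1 + n * r) = 2 * u 1 + r * n by ring,
        pow_add, pow_mul]
      simp
    have key2 : (Nat.fib (u (n + 1) + 1) : ℝ) * Nat.fib (u (n + 1) + k * r) -
        (Nat.fib (u (n + 1)) : ℝ) * Nat.fib (u (n + 1) + k * r + 1)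
          = (-1) ^ (u (n + 1)) * Nat.fib (k * r) := by linear_combination key
    rw [hfk]
    simp only [hT, hf, hc, hidx n]
    rw [div_sub_div _ _ hfa.ne' hfb.ne', key2, div_mul_div_comm,
      div_eq_div_iff (mul_pos hfa hfb).ne'
        (mul_pos hfkr (mul_pos hfa hfb)).ne', ← hsign]
    ring
  -- summability
  have hsum : Summable T := by
    apply Summable.of_norm_bounded (g := fun n => (1 / 2 : ℝ) ^ n)
      (summable_geometric_of_lt_one (by norm_num) (by norm_num))
    intro n
    have hA : (Nat.fib (n + 1) : ℝ) ≤ Nat.fib (u (n + 1)) := by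
      have hnr : n * 1 ≤ n * r := Nat.mul_le_mul le_rfl hr
      exact_mod_cast Nat.fib_mono (by rw [hu n]; omega)
    have hB : (Nat.fib (n + 2) : ℝ) ≤ Nat.fib (u (n + 1 + k)) := by
      have : n + 2 ≤ u (n + 1 + k) := by
        have hnr : (n + k) * 1 ≤ (n + k) * r := Nat.mul_le_mul le_rfl hr
        rw [show n + 1 + k = (n + k) + 1 by omega, hu (n + k)]; omega
      exact_mod_cast Nat.fib_mono this
    have hA0 : (0 : ℝ) < Nat.fib (n + 1) := by exact_mod_cast Nat.fib_pos.2 (by omega)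
    have hB0 : (0 : ℝ) < Nat.fib (n + 2) := by exact_mod_cast Nat.fib_pos.2 (by omega)
    have hge : (2 : ℝ) ^ n ≤ (Nat.fib (n + 1) : ℝ) * Nat.fib (n + 2) := by
      exact_mod_cast aux_fib_prod_ge n
    have h2 : (2 : ℝ) ^ n ≤ (Nat.fib (u (n + 1)) : ℝ) * Nat.fib (u (n + 1 + k)) := by
      calc (2 : ℝ) ^ n ≤ (Nat.fib (n + 1) : ℝ) * Nat.fib (n + 2) := hge
        _ ≤ (Nat.fib (u (n + 1)) : ℝ) * Nat.fib (u (n + 1 + k)) := by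
            apply mul_le_mul hA hB hB0.le (by linarith)
    have hBpos : (0 : ℝ) < (Nat.fib (u (n + 1 + k)) : ℝ) := by
      rw [hidx n]
      have : 0 < u (n + 1) + k * r := by have := hupos n; omega
      exact_mod_cast Nat.fib_pos.2 this
    have hpos : (0 : ℝ) < (Nat.fib (u (n + 1)) : ℝ) * Nat.fib (u (n + 1 + k)) :=
      mul_pos (hfibpos n) hBpos
    simp only [hT]
    rw [Real.norm_eq_abs, abs_div, abs_pow, abs_neg, abs_one, one_pow,
      abs_of_pos hpos, div_pow, one_pow]
    exact one_div_le_one_div_of_le (by positivity) h2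
  -- partial sums
  have hps : ∀ N : ℕ, ∑ n ∈ Finset.range N, T n =
      c * (∑ n ∈ Finset.range k, f n - ∑ n ∈ Finset.range k, f (N + n)) := by
    intro N
    rw [Finset.sum_congr rfl (fun n _ => hterm n), ← Finset.mul_sum, aux_telescope]
  -- limit of tail
  have htail : Tendsto (fun N => ∑ n ∈ Finset.range k, f (N + n)) atTop
      (𝓝 ((k : ℝ) * Phi)) := by
    have hPhi : Phi = Real.goldenRatio := rfl
    have hconst : ((k : ℝ) * Phi) = ∑ _n ∈ Finset.range k, Real.goldenRatio := by
      rw [Finset.sum_const, Finset.card_range, nsmul_eq_mul, hPhi]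
    rw [hconst]
    apply tendsto_finset_sum
    intro i _
    have hcomp : Tendsto (fun N : ℕ => u (N + i + 1)) atTop atTop := by
      apply tendsto_atTop_mono (f := fun N : ℕ => N) _ tendsto_id
      intro N
      show N ≤ u (N + i + 1)
      have hnr : (N + i) * 1 ≤ (N + i) * r := Nat.mul_le_mul le_rfl hr
      rw [mul_one] at hnr
      rw [hu (N + i)]; omega
    have := aux_fib_ratio_tendsto.comp hcomp
    exact this
  have htends2 : Tendsto (fun N => ∑ n ∈ Finset.range N, T n) atTop
      (𝓝 (c * (∑ n ∈ Finset.range k, f n - (k : ℝ) * Phi))) := by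
    simp only [hps]
    exact (tendsto_const_nhds.sub htail).const_mul c
  exact tendsto_nhds_unique hsum.hasSum.tendsto_sum_nat htends2
end

section
/- Let k be a positive integer and a ≥ 2 an integer. Then ∑_{n=1}^∞ F_{(a-1)·k·a^n} / (F_{k·a^n} · F_{k·a^{n+1}}) = 1 / (F_{ka} · Φ^{ka}). -/
open Filter Finset Topology
open scoped goldenRatio

lemma binet_key (t d : ℕ) (hd : Even d) :
    (Nat.fib d : ℝ) * φ ^ (t + (t + d)) =
      (Nat.fib (t + d) : ℝ) * φ ^ (t + d) - (Nat.fib t : ℝ) * φ ^ t := by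
  have h1 : ψ ^ d = (φ ^ d)⁻¹ := by
    refine eq_inv_of_mul_eq_one_left ?_
    rw [← mul_pow, Real.goldenConj_mul_goldenRatio]
    exact hd.neg_one_pow
  have h5 : Real.sqrt 5 ≠ 0 := by positivity
  have hφ : (0:ℝ) < φ := Real.goldenRatio_pos
  rw [Real.coe_fib_eq, Real.coe_fib_eq, Real.coe_fib_eq]
  rw [pow_add Real.goldenConj t d, h1]
  field_simp
  ring

lemma term_eq_s5 (t d : ℕ) (ht : 1 ≤ t) (hd : Even d) :
    (Nat.fib d : ℝ) / ((Nat.fib t : ℝ) * (Nat.fib (t + d) : ℝ)) =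
      1 / ((Nat.fib t : ℝ) * φ ^ t) - 1 / ((Nat.fib (t + d) : ℝ) * φ ^ (t + d)) := by
  have hφ : (0:ℝ) < φ := Real.goldenRatio_pos
  have hft : (0:ℝ) < Nat.fib t := by exact_mod_cast Nat.fib_pos.2 ht
  have hfs : (0:ℝ) < Nat.fib (t + d) := by
    exact_mod_cast Nat.fib_pos.2 (le_trans ht (Nat.le_add_right t d))
  have h := binet_key t d hd
  rw [div_sub_div _ _ (by positivity) (by positivity),
    div_eq_div_iff (by positivity) (by positivity)]
  linear_combination ((Nat.fib t : ℝ) * (Nat.fib (t + d) : ℝ)) * h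

lemma aux_tendsto (k a : ℕ) (hk : 1 ≤ k) (ha : 2 ≤ a) :
    Filter.Tendsto (fun n : ℕ => 1 / ((Nat.fib (k * a ^ (n + 1)) : ℝ) * φ ^ (k * a ^ (n + 1))))
      Filter.atTop (nhds 0) := by
  have hφ1 : (1:ℝ) < φ := Real.one_lt_goldenRatio
  have hφ0 : (0:ℝ) < φ := Real.goldenRatio_pos
  have hle : ∀ n : ℕ, 1 / ((Nat.fib (k * a ^ (n + 1)) : ℝ) * φ ^ (k * a ^ (n + 1)))
      ≤ (φ⁻¹) ^ (n + 1) := by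
    intro n
    have hpos : 1 ≤ k * a ^ (n + 1) := Nat.one_le_iff_ne_zero.2 (by positivity)
    have hfib : (1:ℝ) ≤ Nat.fib (k * a ^ (n + 1)) := by
      exact_mod_cast Nat.fib_pos.2 hpos
    have hexp : n + 1 ≤ k * a ^ (n + 1) := by
      calc n + 1 ≤ 2 ^ (n + 1) := Nat.lt_two_pow_self.le
        _ ≤ a ^ (n + 1) := Nat.pow_le_pow_left (by omega) _
        _ ≤ k * a ^ (n + 1) := Nat.le_mul_of_pos_left _ hk
    have h1 : φ ^ (n + 1) ≤ φ ^ (k * a ^ (n + 1)) := pow_le_pow_right₀ hφ1.le hexp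
    have h2 : φ ^ (n + 1) ≤ (Nat.fib (k * a ^ (n + 1)) : ℝ) * φ ^ (k * a ^ (n + 1)) := by
      nlinarith [pow_pos hφ0 (k * a ^ (n + 1))]
    rw [inv_pow, ← one_div]
    exact one_div_le_one_div_of_le (by positivity) h2
  have htend : Filter.Tendsto (fun n : ℕ => (φ⁻¹) ^ (n + 1)) Filter.atTop (nhds 0) := by
    have h := tendsto_pow_atTop_nhds_zero_of_lt_one (le_of_lt (by positivity : (0:ℝ) < φ⁻¹))
      (by rw [inv_lt_one_iff₀]; right; exact hφ1)
    exact h.comp (tendsto_add_atTop_nat 1)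
  exact squeeze_zero (fun n => by positivity) hle htend

/-- For a positive integer `k` and an integer `a ≥ 2`:
`∑_{n=1}^∞ F_{(a-1)k a^n} / (F_{k a^n} F_{k a^{n+1}}) = 1 / (F_{ka} Φ^{ka})`. -/
theorem statement5 (k : ℕ) (hk : 1 ≤ k) (a : ℕ) (ha : 2 ≤ a) :
    ∑' n : ℕ, (Nat.fib ((a - 1) * k * a ^ (n + 1)) : ℝ) /
        ((Nat.fib (k * a ^ (n + 1)) : ℝ) * (Nat.fib (k * a ^ (n + 2)) : ℝ)) =
      1 / ((Nat.fib (k * a) : ℝ) * Phi ^ (k * a)) := by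
  have hPhi : Phi = φ := by
    unfold Phi Real.goldenRatio
    norm_num
  set f : ℕ → ℝ := fun n => (Nat.fib ((a - 1) * k * a ^ (n + 1)) : ℝ) /
      ((Nat.fib (k * a ^ (n + 1)) : ℝ) * (Nat.fib (k * a ^ (n + 2)) : ℝ)) with hf
  set g : ℕ → ℝ := fun n => 1 / ((Nat.fib (k * a ^ (n + 1)) : ℝ) * φ ^ (k * a ^ (n + 1)))
    with hg
  have hpos : ∀ n, 1 ≤ k * a ^ (n + 1) := fun n =>
    Nat.one_le_iff_ne_zero.2 (by positivity)
  have key : ∀ n, f n = g n - g (n + 1) := by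
    intro n
    have hab : 1 + (a - 1) = a := by omega
    have hsum : k * a ^ (n + 1) + (a - 1) * k * a ^ (n + 1) = k * a ^ (n + 2) := by
      calc k * a ^ (n + 1) + (a - 1) * k * a ^ (n + 1)
          = (1 + (a - 1)) * (k * a ^ (n + 1)) := by ring
        _ = k * a ^ (n + 2) := by rw [hab]; ring
    have heven : Even ((a - 1) * k * a ^ (n + 1)) := by
      rcases Nat.even_or_odd a with h | h
      · have : Even (a ^ (n + 1)) := by rw [pow_succ]; exact h.mul_left _
        exact this.mul_left _
      · have : Even (a - 1) := Nat.Odd.sub_odd h odd_one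
        exact (this.mul_right k).mul_right _
    have := term_eq_s5 (k * a ^ (n + 1)) ((a - 1) * k * a ^ (n + 1)) (hpos n) heven
    rw [hsum] at this
    simpa [hf, hg, pow_succ, mul_comm, mul_assoc, mul_left_comm] using this
  have hgtend : Tendsto g atTop (𝓝 0) := aux_tendsto k a hk ha
  have hfnonneg : ∀ n, 0 ≤ f n := fun n => by
    rw [hf]; positivity
  have hsum : HasSum f (g 0) := by
    rw [hasSum_iff_tendsto_nat_of_nonneg hfnonneg]
    have heq : (fun N => ∑ i ∈ Finset.range N, f i) = fun N => g 0 - g N := by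
      funext N
      rw [← Finset.sum_range_sub' g N]
      exact Finset.sum_congr rfl fun i _ => key i
    rw [heq]
    simpa using tendsto_const_nhds.sub hgtend
  rw [hsum.tsum_eq, hg, hPhi]
  norm_num
end

section
/- For any positive integer k: ∑_{n=1}^∞ L_{k·3^n} / F_{k·3^{n+1}} = 1 / (F_{3k} · Φ^{3k}). -/
open Filter Finset Topology
open scoped goldenRatio

/-- The Lucas sequence: `L_0 = 2`, `L_1 = 1`, `L_{n+2} = L_n + L_{n+1}`. -/
def lucas : ℕ → ℕ
  | 0 => 2
  | 1 => 1
  | n + 2 => lucas n + lucas (n + 1)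

lemma Phi_eq : Phi = Real.goldenRatio := rfl

lemma coe_lucas : ∀ n, (lucas n : ℝ) = φ ^ n + ψ ^ n
  | 0 => by norm_num [lucas]
  | 1 => by simp [lucas, Real.goldenRatio_add_goldenConj]
  | n + 2 => by
    have h1 := coe_lucas n
    have h2 := coe_lucas (n + 1)
    have hφ : φ ^ (n + 2) = φ ^ n + φ ^ (n + 1) := by
      rw [pow_add, Real.goldenRatio_sq]; ring
    have hψ : ψ ^ (n + 2) = ψ ^ n + ψ ^ (n + 1) := by
      rw [pow_add, Real.goldenConj_sq]; ring
    show ((lucas n + lucas (n + 1) : ℕ) : ℝ) = _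
    push_cast
    rw [h1, h2, hφ, hψ]; ring

lemma alg_key (a b s : ℝ) (ha : a ≠ 0) (h1 : a - b ≠ 0) (h3 : a ^ 3 - b ^ 3 ≠ 0)
    (hab : (a * b) ^ 2 = 1) :
    (a + b) / ((a ^ 3 - b ^ 3) / s) =
      1 / (((a - b) / s) * a) - 1 / (((a ^ 3 - b ^ 3) / s) * a ^ 3) := by
  field_simp
  ring_nf
  linear_combination (-s * (a - b)) * hab

lemma key (m : ℕ) (hm : 1 ≤ m) :
    (lucas m : ℝ) / (Nat.fib (3 * m) : ℝ) =
      1 / ((Nat.fib m : ℝ) * Phi ^ m) - 1 / ((Nat.fib (3 * m) : ℝ) * Phi ^ (3 * m)) := by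
  have hfm : (0 : ℝ) < Nat.fib m := by exact_mod_cast Nat.fib_pos.mpr hm
  have hf3m : (0 : ℝ) < Nat.fib (3 * m) := by
    exact_mod_cast Nat.fib_pos.mpr (by omega)
  have s5 : (0 : ℝ) < Real.sqrt 5 := by positivity
  have hfib : (Nat.fib m : ℝ) = (φ ^ m - ψ ^ m) / Real.sqrt 5 := Real.coe_fib_eq m
  have hfib3 : (Nat.fib (3 * m) : ℝ) = ((φ ^ m) ^ 3 - (ψ ^ m) ^ 3) / Real.sqrt 5 := by
    rw [Real.coe_fib_eq, mul_comm 3 m, pow_mul, pow_mul]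
  have hlucas : (lucas m : ℝ) = φ ^ m + ψ ^ m := coe_lucas m
  have hP : Phi ^ m = φ ^ m := rfl
  have hP3 : Phi ^ (3 * m) = (φ ^ m) ^ 3 := by rw [Phi_eq, mul_comm 3 m, pow_mul]
  have hab : ((φ ^ m) * (ψ ^ m)) ^ 2 = 1 := by
    rw [← mul_pow, Real.goldenRatio_mul_goldenConj, ← pow_mul, mul_comm m 2, pow_mul]; norm_num
  have ha0 : φ ^ m ≠ 0 := pow_ne_zero _ Real.goldenRatio_ne_zero
  have hd1 : φ ^ m - ψ ^ m ≠ 0 := by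
    intro h; rw [hfib, h] at hfm; simp at hfm
  have hd3 : (φ ^ m) ^ 3 - (ψ ^ m) ^ 3 ≠ 0 := by
    intro h; rw [hfib3, h] at hf3m; simp at hf3m
  rw [hlucas, hfib, hfib3, hP, hP3]
  exact alg_key _ _ _ ha0 hd1 hd3 hab

/-- For any positive integer `k`:
`∑_{n=1}^∞ L_{k 3^n} / F_{k 3^{n+1}} = 1 / (F_{3k} Φ^{3k})`. -/
theorem statement6 (k : ℕ) (hk : 1 ≤ k) :
    ∑' n : ℕ, (lucas (k * 3 ^ (n + 1)) : ℝ) / (Nat.fib (k * 3 ^ (n + 2)) : ℝ) =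
      1 / ((Nat.fib (3 * k) : ℝ) * Phi ^ (3 * k)) := by
  set f : ℕ → ℝ := fun n => 1 / ((Nat.fib (k * 3 ^ (n + 1)) : ℝ) * Phi ^ (k * 3 ^ (n + 1)))
    with hf
  set g : ℕ → ℝ := fun n => (lucas (k * 3 ^ (n + 1)) : ℝ) / (Nat.fib (k * 3 ^ (n + 2)) : ℝ)
    with hg
  have hterm : ∀ n, g n = f n - f (n + 1) := by
    intro n
    have h3 : k * 3 ^ (n + 2) = 3 * (k * 3 ^ (n + 1)) := by ring
    have hone : 1 ≤ k * 3 ^ (n + 1) := Nat.one_le_iff_ne_zero.mpr (by positivity)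
    have := key (k * 3 ^ (n + 1)) hone
    simp only [hg, hf, h3]
    exact this
  have hgold : (1 : ℝ) < Phi := by rw [Phi_eq]; exact Real.one_lt_goldenRatio
  have hgold0 : (0 : ℝ) < Phi := lt_trans one_pos hgold
  have hftend : Tendsto f atTop (𝓝 0) := by
    have hle : ∀ n : ℕ, f n ≤ (Phi⁻¹) ^ (n + 1) := by
      intro n
      have h1 : (1 : ℝ) ≤ (Nat.fib (k * 3 ^ (n + 1)) : ℝ) := by
        exact_mod_cast Nat.fib_pos.mpr (Nat.one_le_iff_ne_zero.mpr (by positivity))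
      have h2 : Phi ^ (n + 1) ≤ Phi ^ (k * 3 ^ (n + 1)) := by
        apply pow_le_pow_right₀ (le_of_lt hgold)
        calc n + 1 ≤ 3 ^ (n + 1) := (Nat.lt_pow_self (by norm_num)).le
          _ ≤ k * 3 ^ (n + 1) := Nat.le_mul_of_pos_left _ hk
      have hle' : (1 : ℝ) * Phi ^ (n + 1) ≤
          (Nat.fib (k * 3 ^ (n + 1)) : ℝ) * Phi ^ (k * 3 ^ (n + 1)) :=
        mul_le_mul h1 h2 (by positivity) (le_trans zero_le_one h1)
      calc f n ≤ 1 / ((1 : ℝ) * Phi ^ (n + 1)) :=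
            one_div_le_one_div_of_le (by positivity) hle'
        _ = (Phi⁻¹) ^ (n + 1) := by rw [one_mul, inv_pow, one_div]
    have hpos : ∀ n, 0 ≤ f n := fun n => by simp only [hf]; positivity
    have htend : Tendsto (fun n : ℕ => (Phi⁻¹) ^ (n + 1)) atTop (𝓝 0) := by
      have h0 : Tendsto (fun n : ℕ => (Phi⁻¹) ^ n) atTop (𝓝 0) :=
        tendsto_pow_atTop_nhds_zero_of_lt_one (by positivity)
          (by rw [inv_lt_one_iff₀]; right; exact hgold)
      exact h0.comp (tendsto_add_atTop_nat 1)
    exact squeeze_zero hpos hle htend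
  have hnonneg : ∀ n, 0 ≤ g n := fun n => by simp only [hg]; positivity
  have hsum : HasSum g (f 0) := by
    rw [hasSum_iff_tendsto_nat_of_nonneg hnonneg]
    have hps : ∀ N, ∑ n ∈ range N, g n = f 0 - f N := by
      intro N
      simp_rw [hterm]
      exact Finset.sum_range_sub' f N
    rw [tendsto_congr hps]
    simpa using (tendsto_const_nhds.sub hftend)
  rw [hsum.tsum_eq]
  have h30 : k * 3 ^ (0 + 1) = 3 * k := by ring
  simp only [hf, h30]
end

section
/- ∑_{n=0}^∞ L_{3^n} / F_{3^{n+1}} = (√5 − 1)/2. -/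
open Filter Finset Topology

open Nat goldenRatio Real in
lemma lucas_add_fib (n : ℕ) : lucas n + Nat.fib n = 2 * Nat.fib (n + 1) := by
  induction n using Nat.twoStepInduction with
  | zero => simp [lucas]
  | one => simp [lucas]
  | more n ih1 ih2 =>
    rw [lucas, Nat.fib_add_two, Nat.fib_add_two]
    omega

lemma fib_mul_lucas (n : ℕ) : Nat.fib n * lucas n = Nat.fib (2 * n) := by
  have h1 := lucas_add_fib n
  have h2 := Nat.fib_two_mul n
  have h3 : Nat.fib n ≤ 2 * Nat.fib (n + 1) := by omega
  rw [h2]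
  have : 2 * Nat.fib (n + 1) - Nat.fib n = lucas n := by omega
  rw [this, Nat.mul_comm]

lemma cassini (n : ℕ) :
    (Nat.fib (n + 1) : ℤ) ^ 2 - Nat.fib (n + 1) * Nat.fib n - (Nat.fib n : ℤ) ^ 2
      = (-1) ^ n := by
  induction n with
  | zero => simp
  | succ n ih =>
    have h : (Nat.fib (n + 2) : ℤ) = Nat.fib n + Nat.fib (n + 1) := by
      rw [Nat.fib_add_two]; push_cast; ring
    rw [h, pow_succ]
    linear_combination -ih

/-- Key identity for `j` even. -/
lemma key_s7 (j : ℕ) (hj : Even j) :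
    (Nat.fib (3 * j + 2) : ℤ) * Nat.fib (j + 1)
      = Nat.fib (3 * j + 3) * Nat.fib j + Nat.fib (2 * j + 2) := by
  have e1 : Nat.fib (3 * j + 2) = Nat.fib (2 * j + 1) * Nat.fib j
      + Nat.fib (2 * j + 2) * Nat.fib (j + 1) := by
    have := Nat.fib_add (2 * j + 1) j
    convert this using 2 <;> ring
  have e2 : Nat.fib (3 * j + 3) = Nat.fib (2 * j + 2) * Nat.fib j
      + Nat.fib (2 * j + 3) * Nat.fib (j + 1) := by
    have := Nat.fib_add (2 * j + 2) j
    convert this using 2 <;> ring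
  have e3 : Nat.fib (2 * j + 3) = Nat.fib (2 * j + 1) + Nat.fib (2 * j + 2) :=
    Nat.fib_add_two
  have hc := cassini j
  have hjj : ((-1 : ℤ)) ^ j = 1 := hj.neg_one_pow
  rw [hjj] at hc
  have e1' : (Nat.fib (3 * j + 2) : ℤ) = Nat.fib (2 * j + 1) * Nat.fib j
      + Nat.fib (2 * j + 2) * Nat.fib (j + 1) := by exact_mod_cast e1
  have e2' : (Nat.fib (3 * j + 3) : ℤ) = Nat.fib (2 * j + 2) * Nat.fib j
      + Nat.fib (2 * j + 3) * Nat.fib (j + 1) := by exact_mod_cast e2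
  have e3' : (Nat.fib (2 * j + 3) : ℤ) = Nat.fib (2 * j + 1) + Nat.fib (2 * j + 2) := by exact_mod_cast e3
  rw [e1', e2', e3']
  nlinarith [hc]

lemma partial_sum (N : ℕ) :
    ∑ k ∈ Finset.range N, (lucas (3 ^ k) : ℝ) / (Nat.fib (3 ^ (k + 1)) : ℝ)
      = (Nat.fib (3 ^ N - 1) : ℝ) / (Nat.fib (3 ^ N) : ℝ) := by
  induction N with
  | zero => simp
  | succ N ih =>
    rw [Finset.sum_range_succ, ih]
    -- let m = 3 ^ N, j = m - 1 (even)
    obtain ⟨j, hj⟩ : ∃ j, 3 ^ N = j + 1 := ⟨3 ^ N - 1, by have : 1 ≤ 3 ^ N := Nat.one_le_pow _ _ (by norm_num); omega⟩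
    have hje : Even j := by
      have ho : Odd (3 ^ N) := Odd.pow ⟨1, rfl⟩
      rcases ho with ⟨t, ht⟩; exact ⟨t, by omega⟩
    have h31 : 3 ^ (N + 1) = 3 * j + 3 := by rw [pow_succ, hj]; ring
    have hkey := key_s7 j hje
    have hlu : (Nat.fib (j + 1) : ℤ) * lucas (j + 1) = Nat.fib (2 * j + 2) := by
      have h := fib_mul_lucas (j + 1)
      have h2 : 2 * (j + 1) = 2 * j + 2 := by ring
      rw [h2] at h
      exact_mod_cast h
    -- real-valued identity
    have hfib1 : (0 : ℝ) < Nat.fib (j + 1) := by exact_mod_cast Nat.fib_pos.2 (by omega)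
    have hfib3 : (0 : ℝ) < Nat.fib (3 * j + 3) := by exact_mod_cast Nat.fib_pos.2 (by omega)
    have hZ : (Nat.fib (3 * j + 2) : ℝ) * Nat.fib (j + 1)
        = Nat.fib (3 * j + 3) * Nat.fib j + Nat.fib (j + 1) * lucas (j + 1) := by
      have : (Nat.fib (3 * j + 2) : ℤ) * Nat.fib (j + 1)
          = Nat.fib (3 * j + 3) * Nat.fib j + Nat.fib (j + 1) * lucas (j + 1) := by
        rw [hlu]; exact hkey
      exact_mod_cast this
    rw [hj, h31]
    have h2 : 3 * j + 3 - 1 = 3 * j + 2 := by omega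
    have h3 : j + 1 - 1 = j := by omega
    rw [h2, h3]
    field_simp
    linear_combination -hZ

open Real goldenRatio in
lemma fib_ratio_tendsto_s7 :
    Tendsto (fun n : ℕ => (Nat.fib n : ℝ) / (Nat.fib (n + 1) : ℝ)) atTop
      (𝓝 ((Real.sqrt 5 - 1) / 2)) := by
  have h5 : Real.sqrt 5 * Real.sqrt 5 = 5 := Real.mul_self_sqrt (by norm_num)
  have hs5 : Real.sqrt 5 ≠ 0 := by positivity
  have hrabs : |ψ / φ| < 1 := by
    rw [abs_div, abs_of_pos goldenRatio_pos, div_lt_one goldenRatio_pos, abs_lt]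
    exact ⟨by linarith [one_lt_goldenRatio, neg_one_lt_goldenConj],
      by linarith [goldenRatio_pos, goldenConj_neg]⟩
  have hpow : Tendsto (fun n : ℕ => (ψ / φ) ^ n) atTop (𝓝 0) :=
    tendsto_pow_atTop_nhds_zero_of_abs_lt_one hrabs
  have hlim : Tendsto (fun n : ℕ => (1 - (ψ / φ) ^ n) / (φ - ψ * (ψ / φ) ^ n)) atTop
      (𝓝 ((1 - 0) / (φ - ψ * 0))) := by
    refine Tendsto.div (tendsto_const_nhds.sub hpow)
      (tendsto_const_nhds.sub (hpow.const_mul ψ)) ?_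
    rw [mul_zero, sub_zero]; exact goldenRatio_ne_zero
  have hval : (1 - (0 : ℝ)) / (φ - ψ * 0) = (Real.sqrt 5 - 1) / 2 := by
    rw [mul_zero, sub_zero, sub_zero, one_div]
    rw [inv_eq_iff_eq_inv, eq_comm, inv_eq_iff_eq_inv, eq_comm] at *
    have hmul : ((Real.sqrt 5 - 1) / 2) * φ = 1 := by
      show ((Real.sqrt 5 - 1) / 2) * ((1 + Real.sqrt 5) / 2) = 1
      nlinarith [h5]
    field_simp
    nlinarith [h5]
  rw [hval] at hlim
  refine hlim.congr fun n => ?_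
  have hfibpos : (0 : ℝ) < Nat.fib (n + 1) := by exact_mod_cast Nat.fib_pos.2 (by omega)
  have hphin : (φ : ℝ) ^ n ≠ 0 := pow_ne_zero _ goldenRatio_ne_zero
  have hB : φ ^ (n + 1) - ψ ^ (n + 1) ≠ 0 := by
    intro h
    have h2 := Real.coe_fib_eq (n + 1)
    rw [h, zero_div] at h2
    exact hfibpos.ne' h2
  have hden2eq : φ - ψ * (ψ ^ n / φ ^ n) = (φ ^ (n + 1) - ψ ^ (n + 1)) / φ ^ n := by
    field_simp
    ring
  have hden2 : φ - ψ * (ψ ^ n / φ ^ n) ≠ 0 := by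
    rw [hden2eq]
    exact div_ne_zero hB hphin
  have hAB : (φ ^ n - ψ ^ n) / Real.sqrt 5 / ((φ ^ (n + 1) - ψ ^ (n + 1)) / Real.sqrt 5)
      = (φ ^ n - ψ ^ n) / (φ ^ (n + 1) - ψ ^ (n + 1)) := by
    rw [div_div_div_comm, div_self hs5, div_one]
  rw [div_pow, Real.coe_fib_eq n, Real.coe_fib_eq (n + 1), hAB,
    div_eq_div_iff hden2 hB]
  field_simp
  ring

/-- `∑_{n=0}^∞ L_{3^n} / F_{3^{n+1}} = (√5 - 1)/2`. -/
theorem statement7 :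
    ∑' n : ℕ, (lucas (3 ^ n) : ℝ) / (Nat.fib (3 ^ (n + 1)) : ℝ) =
      (Real.sqrt 5 - 1) / 2 := by
  have hnonneg : ∀ i : ℕ, 0 ≤ (lucas (3 ^ i) : ℝ) / (Nat.fib (3 ^ (i + 1)) : ℝ) :=
    fun i => by positivity
  have h1 : Tendsto (fun N : ℕ => 3 ^ N - 1) atTop atTop := by
    apply tendsto_atTop_mono (fun N => ?_) tendsto_id
    have := Nat.lt_pow_self (n := N) (by norm_num : 1 < 3)
    simp only [id]
    omega
  have htend : Tendsto
      (fun N => ∑ k ∈ Finset.range N, (lucas (3 ^ k) : ℝ) / (Nat.fib (3 ^ (k + 1)) : ℝ))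
      atTop (𝓝 ((Real.sqrt 5 - 1) / 2)) := by
    refine (fib_ratio_tendsto_s7.comp h1).congr fun N => ?_
    have e : 3 ^ N - 1 + 1 = 3 ^ N := by
      have : 1 ≤ 3 ^ N := Nat.one_le_pow _ _ (by norm_num)
      omega
    simp only [Function.comp_apply, e]
    rw [← partial_sum]
  exact ((hasSum_iff_tendsto_nat_of_nonneg hnonneg _).2 htend).tsum_eq
end

section
/- ∑_{n=1}^∞ (-1)^{F_n} · F_{F_{n+1}} / (F_{F_n} · F_{F_{n+2}}) = 1 − √5. -/
open Filter Finset Topology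

open Nat (fib)

open Real

noncomputable def gg (n : ℕ) : ℝ := (fib (fib (n + 1) + 1) : ℝ) / (fib (fib (n + 1)) : ℝ)

-- d'Ocagne-type identity
lemma fib_key (a c : ℕ) :
    (fib (a + 1) : ℤ) * fib (a + c) - fib (a + c + 1) * fib a = (-1 : ℤ) ^ a * fib c := by
  induction a generalizing c with
  | zero => simp
  | succ a ih =>
    have h1 : (fib (a + 2) : ℤ) = fib a + fib (a + 1) := by
      exact_mod_cast Nat.fib_add_two
    have h2 : (fib (a + 1 + c + 1) : ℤ) = fib (a + c) + fib (a + c + 1) := by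
      have : a + 1 + c + 1 = (a + c) + 2 := by ring
      rw [this]; exact_mod_cast Nat.fib_add_two
    have h3 := ih (c + 1)
    have h4 : (fib (a + (c + 1)) : ℤ) = fib (a + c + 1) := by norm_num [add_assoc]
    have h5 : (fib (a + (c + 1) + 1) : ℤ) = fib (a + c + 2) := by norm_num [add_assoc]
    have h6 : (fib (a + c + 2) : ℤ) = fib (a + c) + fib (a + c + 1) := by
      exact_mod_cast Nat.fib_add_two
    have h6' : (fib (a + c + 1 + 1) : ℤ) = fib (a + c) + fib (a + c + 1) := by
      exact_mod_cast Nat.fib_add_two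
    have hih := ih c
    have : a + 1 + c = a + c + 1 := by ring
    rw [this, h1, h6', pow_succ]
    linear_combination (-1 : ℤ) * hih

lemma fib_fib_pos (n : ℕ) : 0 < fib (fib (n + 1)) :=
  Nat.fib_pos.mpr (Nat.fib_pos.mpr n.succ_pos)

lemma term_eq_s8 (n : ℕ) :
    (-1 : ℝ) ^ (fib (n + 1)) *
        ((fib (fib (n + 2)) : ℝ) / ((fib (fib (n + 1)) : ℝ) * (fib (fib (n + 3)) : ℝ))) =
    gg n - gg (n + 2) := by
  have key := fib_key (fib (n + 1)) (fib (n + 2))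
  have hsum : fib (n + 1) + fib (n + 2) = fib (n + 3) := (Nat.fib_add_two).symm
  rw [hsum] at key
  have ha : (0 : ℝ) < fib (fib (n + 1)) := by exact_mod_cast fib_fib_pos n
  have hb : (0 : ℝ) < fib (fib (n + 3)) := by exact_mod_cast fib_fib_pos (n + 2)
  have keyR : (fib (fib (n+1) + 1) : ℝ) * fib (fib (n+3)) - fib (fib (n+3) + 1) * fib (fib (n+1))
      = (-1 : ℝ) ^ (fib (n+1)) * fib (fib (n+2)) := by exact_mod_cast key
  unfold gg
  have h3 : n + 2 + 1 = n + 3 := rfl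
  rw [h3]
  field_simp
  nlinarith [keyR]

lemma fib_tendsto_atTop : Tendsto fib atTop atTop :=
  Nat.fib_mono.tendsto_atTop_atTop fun b => ⟨b + 1, by have := Nat.le_fib_add_one (b + 1); omega⟩

lemma ratio_tendsto :
    Tendsto (fun m : ℕ => (fib (m + 1) : ℝ) / fib m) atTop (𝓝 goldenRatio) := by
  have habs : |goldenConj| < 1 := by
    rw [abs_lt]; constructor
    · exact neg_one_lt_goldenConj
    · linarith [goldenConj_neg]
  have h0 : Tendsto (fun m : ℕ => |goldenConj| ^ m) atTop (𝓝 0) :=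
    tendsto_pow_atTop_nhds_zero_of_lt_one (abs_nonneg _) habs
  rw [show 𝓝 goldenRatio = 𝓝 (goldenRatio + 0) by rw [add_zero]]
  have heq : ∀ᶠ m : ℕ in atTop,
      goldenRatio + goldenConj ^ m / (fib m : ℝ) = (fib (m + 1) : ℝ) / fib m := by
    filter_upwards [eventually_ge_atTop 1] with m hm
    have hpos : (0 : ℝ) < fib m := by exact_mod_cast Nat.fib_pos.mpr hm
    have hid := fib_succ_sub_goldenRatio_mul_fib m
    rw [eq_div_iff hpos.ne', add_mul, div_mul_cancel₀ _ hpos.ne']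
    linarith [hid]
  refine Tendsto.congr' heq (tendsto_const_nhds.add ?_)
  refine squeeze_zero_norm' ?_ h0
  filter_upwards [eventually_ge_atTop 1] with m hm
  have hpos : (1 : ℝ) ≤ fib m := by exact_mod_cast Nat.fib_pos.mpr hm
  have h9 : ‖goldenConj ^ m / (fib m : ℝ)‖ = |goldenConj| ^ m / (fib m : ℝ) := by
    rw [norm_div, norm_pow, Real.norm_eq_abs, Real.norm_eq_abs,
      abs_of_nonneg (by positivity : (0:ℝ) ≤ (fib m : ℝ))]
  rw [h9]
  exact div_le_self (by positivity) hpos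

lemma gg_tendsto : Tendsto gg atTop (𝓝 goldenRatio) := by
  apply ratio_tendsto.comp
  exact fib_tendsto_atTop.comp (tendsto_add_atTop_nat 1)

lemma two_pow_le_fib (n : ℕ) : 2 ^ n ≤ fib (2 * n + 2) := by
  induction n with
  | zero => simp
  | succ n ih =>
    have h1 : fib (2 * n + 2) ≤ fib (2 * n + 3) := Nat.fib_le_fib_succ
    have h2 : fib (2 * n + 4) = fib (2 * n + 2) + fib (2 * n + 3) := Nat.fib_add_two
    have : 2 * (n + 1) + 2 = 2 * n + 4 := by ring
    rw [this, h2, pow_succ]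
    omega

lemma fib_lin (n : ℕ) : 2 * n + 2 ≤ fib (n + 5) := by
  induction n with
  | zero => decide
  | succ n ih =>
    have h2 : fib (n + 6) = fib (n + 4) + fib (n + 5) := Nat.fib_add_two
    have h3 : 2 ≤ fib (n + 4) := by
      calc 2 ≤ fib 4 := by decide
        _ ≤ fib (n + 4) := Nat.fib_mono (by omega)
    show 2 * (n + 1) + 2 ≤ fib (n + 6)
    omega

lemma fib_geo (n : ℕ) : 2 ^ n ≤ fib (fib (n + 5)) := by
  calc 2 ^ n ≤ fib (2 * n + 2) := two_pow_le_fib n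
    _ ≤ fib (fib (n + 5)) := Nat.fib_mono (fib_lin n)

noncomputable def f (n : ℕ) : ℝ :=
  (-1 : ℝ) ^ (fib (n + 1)) *
    ((fib (fib (n + 2)) : ℝ) / ((fib (fib (n + 1)) : ℝ) * (fib (fib (n + 3)) : ℝ)))

lemma f_bound (n : ℕ) : ‖f (n + 4)‖ ≤ (1 / 2) ^ n := by
  unfold f
  simp only [show n + 4 + 1 = n + 5 from rfl, show n + 4 + 2 = n + 6 from rfl,
    show n + 4 + 3 = n + 7 from rfl]
  rw [norm_mul, norm_pow, norm_neg, norm_one, one_pow, one_mul, norm_div, norm_mul]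
  have ha : (0 : ℝ) < fib (fib (n + 5)) := by exact_mod_cast fib_fib_pos (n + 4)
  have hb : (0 : ℝ) < fib (fib (n + 7)) := by exact_mod_cast fib_fib_pos (n + 6)
  have hc : (fib (fib (n + 6)) : ℝ) ≤ fib (fib (n + 7)) := by
    exact_mod_cast Nat.fib_mono (Nat.fib_mono (by omega))
  have hgeo : (2 : ℝ) ^ n ≤ fib (fib (n + 5)) := by exact_mod_cast fib_geo n
  simp only [Real.norm_eq_abs, abs_of_nonneg (le_of_lt ha), abs_of_nonneg (le_of_lt hb),
    abs_of_nonneg (Nat.cast_nonneg _ : (0:ℝ) ≤ (fib (fib (n+6)) : ℝ))]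
  rw [div_pow, one_pow]
  rw [div_le_div_iff₀ (by positivity) (by positivity)]
  calc (fib (fib (n + 6)) : ℝ) * 2 ^ n ≤ fib (fib (n + 7)) * fib (fib (n + 5)) :=
        mul_le_mul hc hgeo (by positivity) (by positivity)
    _ = 1 * ((fib (fib (n + 5)) : ℝ) * fib (fib (n + 7))) := by ring

lemma f_summable : Summable f := by
  rw [← summable_nat_add_iff 4]
  apply Summable.of_norm_bounded (summable_geometric_of_lt_one (by norm_num) (by norm_num : (1:ℝ)/2 < 1)) f_bound

/-- `∑_{n=1}^∞ (-1)^{F_n} F_{F_{n+1}} / (F_{F_n} F_{F_{n+2}}) = 1 - √5`. -/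
theorem statement8 :
    ∑' n : ℕ, (-1 : ℝ) ^ (Nat.fib (n + 1)) *
        ((Nat.fib (Nat.fib (n + 2)) : ℝ) /
          ((Nat.fib (Nat.fib (n + 1)) : ℝ) * (Nat.fib (Nat.fib (n + 3)) : ℝ))) =
      1 - Real.sqrt 5 := by
  have hsum : HasSum f (1 - Real.sqrt 5) := by
    rw [(f_summable.hasSum_iff_tendsto_nat)]
    have hps : ∀ N, ∑ i ∈ range N, f i = (gg 0 - gg N) + (gg 1 - gg (N + 1)) := by
      intro N
      have : ∀ i, f i = (gg i - gg (i + 1)) + (gg (i + 1) - gg (i + 2)) := by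
        intro i; rw [show gg i - gg (i+1) + (gg (i+1) - gg (i+2)) = gg i - gg (i+2) by ring]
        exact term_eq_s8 i
      rw [Finset.sum_congr rfl fun i _ => this i, Finset.sum_add_distrib,
        Finset.sum_range_sub' gg N, Finset.sum_range_sub' (fun i => gg (i + 1)) N]
    simp only [hps]
    have h1 : Tendsto (fun N => gg N) atTop (𝓝 goldenRatio) := gg_tendsto
    have h2 : Tendsto (fun N => gg (N + 1)) atTop (𝓝 goldenRatio) :=
      gg_tendsto.comp (tendsto_add_atTop_nat 1)
    have h3 : Tendsto (fun N => (gg 0 - gg N) + (gg 1 - gg (N + 1))) atTop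
        (𝓝 ((gg 0 - goldenRatio) + (gg 1 - goldenRatio))) :=
      ((tendsto_const_nhds (x := gg 0)).sub h1).add ((tendsto_const_nhds (x := gg 1)).sub h2)
    have hg0 : gg 0 = 1 := by
      unfold gg; norm_num [Nat.fib_one, Nat.fib_two]
    have hg1 : gg 1 = 1 := by
      unfold gg; norm_num [Nat.fib_one, Nat.fib_two]
    have hval : (gg 0 - goldenRatio) + (gg 1 - goldenRatio) = 1 - Real.sqrt 5 := by
      rw [hg0, hg1, goldenRatio]; ring
    rw [← hval]
    exact h3
  exact hsum.tsum_eq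
end

section
/- For positive integers r and k, define S_{r,k} := ∑_{n=1}^∞ (-1)^{(r-1)(n-1)} / (F_{rn} · F_{r(n+k)}). Then for any positive integer r and any odd positive integer k: S_{r,k} = (F_r / F_{rk}) · ( S_{r,1} + (-1)^r · ∑_{n=1}^{(k-1)/2} 1 / (F_{2nr} · F_{(2n+1)r}) ). -/
open Filter Finset Topology

/-- `S r k = ∑_{n=1}^∞ (-1)^{(r-1)(n-1)} / (F_{rn} F_{r(n+k)})`. -/
noncomputable def S (r k : ℕ) : ℝ :=
  ∑' n : ℕ, (-1 : ℝ) ^ ((r - 1) * n) /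
    ((Nat.fib (r * (n + 1)) : ℝ) * (Nat.fib (r * (n + 1 + k)) : ℝ))

lemma docagne : ∀ a b : ℕ, (Nat.fib (a+b) : ℝ) * Nat.fib (a+1) - Nat.fib (a+b+1) * Nat.fib a
    = (-1:ℝ)^a * Nat.fib b
  | 0, b => by simp
  | (a+1), b => by
    have ih := docagne a b
    have h1 : Nat.fib (a+2) = Nat.fib a + Nat.fib (a+1) := Nat.fib_add_two
    have h2 : Nat.fib (a+b+2) = Nat.fib (a+b) + Nat.fib (a+b+1) := Nat.fib_add_two
    simp only [show a+1+b = a+b+1 by ring, show a+1+1 = a+2 by ring,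
      show a+b+1+1 = a+b+2 by ring]
    rw [h1, h2, pow_succ]
    push_cast
    linear_combination (-1:ℝ) * ih

lemma fib_lower : ∀ m : ℕ, (3/2:ℝ)^m ≤ Nat.fib (m+2)
  | 0 => by norm_num
  | 1 => by norm_num [Nat.fib]
  | (m+2) => by
    have h1 := fib_lower m
    have h2 := fib_lower (m+1)
    simp only [show m+1+2 = m+3 by ring, pow_succ] at h2
    have h : Nat.fib (m+4) = Nat.fib (m+2) + Nat.fib (m+3) := Nat.fib_add_two
    rw [show m+2+2 = m+4 by ring, h, pow_succ, pow_succ]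
    push_cast
    nlinarith [pow_nonneg (by norm_num : (0:ℝ) ≤ 3/2) m]

lemma fib_lower' : ∀ m : ℕ, (2/3:ℝ)*(3/2)^m ≤ Nat.fib (m+1)
  | 0 => by norm_num
  | (m+1) => by
    have := fib_lower m
    rw [pow_succ]
    calc (2/3:ℝ)*((3/2)^m*(3/2)) = (3/2)^m := by ring
      _ ≤ Nat.fib (m+2) := this

lemma one_le_fib_real {m : ℕ} (hm : 1 ≤ m) : (1:ℝ) ≤ Nat.fib m := by
  exact_mod_cast Nat.fib_pos.mpr hm

lemma fib_real_pos {m : ℕ} (hm : 1 ≤ m) : (0:ℝ) < Nat.fib m :=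
  lt_of_lt_of_le one_pos (one_le_fib_real hm)

lemma key_bound (r m X : ℕ) (hr : 1 ≤ r) (hX : 1 ≤ X) :
    1/((Nat.fib (r*(m+1)):ℝ) * (Nat.fib X:ℝ)) ≤ (3/2)*(2/3)^m := by
  have hmono : (Nat.fib (m+1) : ℝ) ≤ Nat.fib (r*(m+1)) :=
    Nat.cast_le.mpr (Nat.fib_mono (Nat.le_mul_of_pos_left (m+1) hr))
  have hf1 : (2/3:ℝ)*(3/2)^m ≤ Nat.fib (r*(m+1)) := le_trans (fib_lower' m) hmono
  have h2 : (1:ℝ) ≤ Nat.fib X := one_le_fib_real hX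
  have pos : (0:ℝ) < (2/3)*(3/2)^m := by positivity
  have hprod : (2/3:ℝ)*(3/2)^m ≤ (Nat.fib (r*(m+1)):ℝ) * Nat.fib X :=
    le_trans hf1 (le_mul_of_one_le_right (le_trans pos.le hf1) h2)
  have heq : ((2/3:ℝ)*(3/2)^m) * ((3/2)*(2/3)^m) = 1 := by
    rw [mul_mul_mul_comm, ← mul_pow]; norm_num
  calc 1/((Nat.fib (r*(m+1)):ℝ) * Nat.fib X) ≤ 1/((2/3)*(3/2)^m) :=
        one_div_le_one_div_of_le pos hprod
    _ = (3/2)*(2/3)^m := (eq_one_div_of_mul_eq_one_left ?_).symm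
  linear_combination heq

lemma summable_t (r k : ℕ) (hr : 1 ≤ r) :
    Summable (fun n : ℕ => (-1:ℝ)^((r-1)*n) /
      ((Nat.fib (r*(n+1)):ℝ) * (Nat.fib (r*(n+1+k)):ℝ))) := by
  have hg : Summable (fun n : ℕ => (3/2:ℝ)*(2/3)^n) :=
    (summable_geometric_of_lt_one (by norm_num) (by norm_num)).mul_left _
  refine Summable.of_norm_bounded hg (fun n => ?_)
  have p1 : (0:ℝ) < Nat.fib (r*(n+1)) := fib_real_pos (Nat.mul_pos hr n.succ_pos)
  have p2 : (0:ℝ) < Nat.fib (r*(n+1+k)) := fib_real_pos (Nat.mul_pos hr (by omega))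
  have : ‖(-1:ℝ)^((r-1)*n) / ((Nat.fib (r*(n+1)):ℝ) * (Nat.fib (r*(n+1+k)):ℝ))‖
      = 1/((Nat.fib (r*(n+1)):ℝ) * (Nat.fib (r*(n+1+k)):ℝ)) := by
    rw [norm_div, norm_pow, norm_neg, norm_one, one_pow, Real.norm_eq_abs,
      abs_of_pos (mul_pos p1 p2)]
  rw [this]
  exact key_bound r n _ hr (Nat.mul_pos hr (by omega))

noncomputable def cc (r n : ℕ) : ℝ :=
  (-1:ℝ)^n * ((Nat.fib (r*(n+1)+1) : ℝ) / (Nat.fib (r*(n+1)) : ℝ))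

lemma pair_eq (r m : ℕ) (hr : 1 ≤ r) :
    cc r m + cc r (m+1) = (-1:ℝ)^m * (-1)^(r*(m+1)) * Nat.fib r /
      ((Nat.fib (r*(m+1)) : ℝ) * (Nat.fib (r*(m+2)) : ℝ)) := by
  have hd := docagne (r*(m+1)) r
  rw [show r*(m+1)+r = r*(m+2) by ring] at hd
  have p1 : (0:ℝ) < Nat.fib (r*(m+1)) := fib_real_pos (Nat.mul_pos hr m.succ_pos)
  have p2 : (0:ℝ) < Nat.fib (r*(m+2)) := fib_real_pos (Nat.mul_pos hr (by omega))
  unfold cc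
  rw [show m+1+1 = m+2 by ring, pow_succ]
  field_simp
  linear_combination hd

lemma keyterm (r s k j n : ℕ) (hr : r = s+1) (hk : k = 2*j+1) :
    (Nat.fib (r*k):ℝ) * ((-1:ℝ)^((r-1)*n) /
        ((Nat.fib (r*(n+1)) : ℝ) * (Nat.fib (r*(n+1+k)) : ℝ)))
    = (-1:ℝ)^r * (cc r n + cc r (n+k)) := by
  have hd := docagne (r*(n+1)) (r*k)
  rw [show r*(n+1)+r*k = r*(n+1+k) by ring] at hd
  have p1 : (0:ℝ) < Nat.fib (r*(n+1)) := fib_real_pos (Nat.mul_pos (by omega) n.succ_pos)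
  have p2 : (0:ℝ) < Nat.fib (r*(n+1+k)) := fib_real_pos (Nat.mul_pos (by omega) (by omega))
  have h0 : r-1 = s := by omega
  have h2 : (-1:ℝ)^(n+k) = -(-1:ℝ)^n := by
    subst hk
    rw [show n+(2*j+1) = (n+1)+2*j by ring, pow_add, pow_mul]
    norm_num [pow_succ]
  have hidx : r*(n+1) = s*n + (r + n) := by subst hr; ring
  have hsgn : (-1:ℝ)^(r*(n+1)) = (-1:ℝ)^(s*n)*((-1:ℝ)^r*(-1:ℝ)^n) := by
    rw [hidx, pow_add, pow_add]
  rw [hsgn] at hd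
  have hq1 : ((-1:ℝ)^r)^2 = 1 := by rw [← pow_mul, mul_comm, pow_mul]; norm_num
  have hq2 : ((-1:ℝ)^n)^2 = 1 := by rw [← pow_mul, mul_comm, pow_mul]; norm_num
  unfold cc
  rw [show n+k+1 = n+1+k by ring, h0, h2]
  set A := (Nat.fib (r*(n+1)) : ℝ)
  set A1 := (Nat.fib (r*(n+1)+1) : ℝ)
  set B := (Nat.fib (r*(n+1+k)) : ℝ)
  set B1 := (Nat.fib (r*(n+1+k)+1) : ℝ)
  set C := (Nat.fib (r*k) : ℝ)
  field_simp
  linear_combination (-(-1:ℝ)^r*(-1)^n)*hd +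
    (-(((-1:ℝ)^n)^2 * (-1)^(s*n) * C))*hq1 + (-((-1:ℝ)^(s*n) * C))*hq2

lemma pair_norm (r m : ℕ) (hr : 1 ≤ r) :
    ‖cc r m + cc r (m+1)‖ ≤ (Nat.fib r : ℝ) * ((3/2)*(2/3)^m) := by
  have p1 : (0:ℝ) < Nat.fib (r*(m+1)) := fib_real_pos (Nat.mul_pos hr m.succ_pos)
  have p2 : (0:ℝ) < Nat.fib (r*(m+2)) := fib_real_pos (Nat.mul_pos hr (by omega))
  rw [pair_eq r m hr, Real.norm_eq_abs, abs_div, abs_mul, abs_mul, abs_pow, abs_pow,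
    abs_neg, abs_one, one_pow, one_pow, one_mul, one_mul,
    abs_of_nonneg (Nat.cast_nonneg _), abs_of_pos (mul_pos p1 p2)]
  rw [div_eq_mul_one_div]
  exact mul_le_mul_of_nonneg_left (key_bound r m _ hr (Nat.mul_pos hr (by omega)))
    (Nat.cast_nonneg _)

lemma pair_tendsto (r c : ℕ) (hr : 1 ≤ r) :
    Tendsto (fun N => cc r (N+c) + cc r (N+c+1)) atTop (𝓝 0) := by
  have hb : Tendsto (fun N : ℕ => (Nat.fib r : ℝ) * ((3/2)*((2/3)^c * (2/3)^N)))
      atTop (𝓝 0) := by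
    have := tendsto_pow_atTop_nhds_zero_of_lt_one (by norm_num : (0:ℝ) ≤ 2/3)
      (by norm_num : (2/3:ℝ) < 1)
    simpa using ((this.const_mul ((2/3:ℝ)^c)).const_mul (3/2:ℝ)).const_mul (Nat.fib r : ℝ)
  refine squeeze_zero_norm (fun N => ?_) hb
  have := pair_norm r (N+c) hr
  rw [pow_add] at this
  simpa [mul_comm, mul_assoc, mul_left_comm] using this

lemma sum_range_two_mul (a : ℕ → ℝ) : ∀ K : ℕ,
    ∑ i ∈ Finset.range (2*K), a i = ∑ j ∈ Finset.range K, (a (2*j) + a (2*j+1))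
  | 0 => by simp
  | (K+1) => by
    rw [show 2*(K+1) = 2*K+1+1 by ring, Finset.sum_range_succ, Finset.sum_range_succ,
      Finset.sum_range_succ, sum_range_two_mul a K]
    ring

theorem statement14 (r k : ℕ) (hr : 1 ≤ r) (hk : 1 ≤ k) (hkodd : Odd k) :
    S r k = ((Nat.fib r : ℝ) / (Nat.fib (r * k) : ℝ)) *
      (S r 1 + (-1 : ℝ) ^ r *
        ∑ n ∈ Finset.range ((k - 1) / 2),
          1 / ((Nat.fib (2 * (n + 1) * r) : ℝ) * (Nat.fib ((2 * (n + 1) + 1) * r) : ℝ))) := by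
  obtain ⟨j, hj⟩ := hkodd
  have hj' : k = 2*j+1 := by omega
  obtain ⟨s, hs⟩ : ∃ s, r = s+1 := ⟨r-1, by omega⟩
  set t : ℕ → ℕ → ℝ := fun k' n => (-1:ℝ)^((r-1)*n) /
    ((Nat.fib (r*(n+1)):ℝ) * (Nat.fib (r*(n+1+k')):ℝ)) with ht
  have hT : ∀ k', Tendsto (fun N => ∑ n ∈ Finset.range N, t k' n) atTop (𝓝 (S r k')) :=
    fun k' => (summable_t r k' hr).hasSum.tendsto_sum_nat
  -- partial sum identity
  have key : ∀ (kk jj : ℕ), kk = 2*jj+1 → ∀ N : ℕ,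
      (Nat.fib (r*kk):ℝ) * ∑ n ∈ Finset.range N, t kk n
      = (-1:ℝ)^r * (∑ n ∈ Finset.range N, cc r n + ∑ n ∈ Finset.range N, cc r (n+kk)) := by
    intro kk jj hkk N
    rw [Finset.mul_sum]
    rw [Finset.sum_congr rfl (fun n _ => keyterm r s kk jj n hs hkk)]
    rw [← Finset.mul_sum, Finset.sum_add_distrib]
  set D : ℕ → ℝ := fun N => ∑ m ∈ Finset.Ico (N+1) (N+k), cc r m with hD
  set A : ℝ := ∑ m ∈ Finset.Ico 1 k, cc r m with hA
  have shift : ∀ (kk N : ℕ),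
      ∑ n ∈ Finset.range N, cc r (n+kk) = ∑ m ∈ Finset.Ico kk (N+kk), cc r m := by
    intro kk N
    rw [Finset.sum_Ico_eq_sum_range]
    simp only [Nat.add_sub_cancel]
    exact Finset.sum_congr rfl fun i _ => by rw [Nat.add_comm]
  have split : ∀ N : ℕ,
      (∑ m ∈ Finset.Ico k (N+k), cc r m) - ∑ m ∈ Finset.Ico 1 (N+1), cc r m = D N - A := by
    intro N
    have h1 : A + ∑ m ∈ Finset.Ico k (N+k), cc r m = ∑ m ∈ Finset.Ico 1 (N+k), cc r m :=
      Finset.sum_Ico_consecutive _ (by omega) (by omega)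
    have h2 : (∑ m ∈ Finset.Ico 1 (N+1), cc r m) + D N = ∑ m ∈ Finset.Ico 1 (N+k), cc r m :=
      Finset.sum_Ico_consecutive _ (by omega) (by omega)
    linarith
  have hL : ∀ N : ℕ, (Nat.fib (r*k):ℝ) * (∑ n ∈ Finset.range N, t k n)
      - (Nat.fib r:ℝ) * (∑ n ∈ Finset.range N, t 1 n) = (-1:ℝ)^r * (D N - A) := by
    intro N
    have e1 := key k j hj' N
    have e2 := key 1 0 rfl N
    rw [Nat.mul_one] at e2
    rw [e1, e2, shift k N, shift 1 N]
    have h3 := split N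
    linear_combination ((-1:ℝ)^r) * h3
  -- limits
  have lim1 : Tendsto (fun N => (Nat.fib (r*k):ℝ) * (∑ n ∈ Finset.range N, t k n)
      - (Nat.fib r:ℝ) * (∑ n ∈ Finset.range N, t 1 n)) atTop
      (𝓝 ((Nat.fib (r*k):ℝ) * S r k - (Nat.fib r:ℝ) * S r 1)) :=
    ((hT k).const_mul _).sub ((hT 1).const_mul _)
  have limD : Tendsto D atTop (𝓝 0) := by
    have hDeq : ∀ N, D N = ∑ jj ∈ Finset.range j, (cc r (N+(2*jj+1)) + cc r (N+(2*jj+1)+1)) := by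
      intro N
      rw [hD]
      simp only
      rw [Finset.sum_Ico_eq_sum_range, show N+k-(N+1) = 2*j by omega, sum_range_two_mul]
      exact Finset.sum_congr rfl fun jj _ => by
        rw [show N+1+2*jj = N+(2*jj+1) by ring, show N+1+(2*jj+1) = N+(2*jj+1)+1 by ring]
    rw [funext hDeq]
    have : Tendsto (fun N => ∑ jj ∈ Finset.range j,
        (cc r (N+(2*jj+1)) + cc r (N+(2*jj+1)+1))) atTop (𝓝 (∑ jj ∈ Finset.range j, 0)) :=
      tendsto_finset_sum _ (fun jj _ => pair_tendsto r (2*jj+1) hr)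
    simpa using this
  have lim2 : Tendsto (fun N => (-1:ℝ)^r * (D N - A)) atTop (𝓝 ((-1:ℝ)^r * (0 - A))) :=
    ((limD.sub tendsto_const_nhds).const_mul _)
  have main : (Nat.fib (r*k):ℝ) * S r k - (Nat.fib r:ℝ) * S r 1 = (-1:ℝ)^r * (0 - A) := by
    refine tendsto_nhds_unique ?_ lim2
    rw [← funext hL]
    exact lim1
  -- value of A
  have hAval : A = -((Nat.fib r:ℝ) * ∑ n ∈ Finset.range ((k-1)/2),
      1 / ((Nat.fib (2*(n+1)*r) : ℝ) * (Nat.fib ((2*(n+1)+1)*r) : ℝ))) := by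
    rw [hA, Finset.sum_Ico_eq_sum_range, show k-1 = 2*j by omega, sum_range_two_mul,
      show 2*j/2 = j by omega, Finset.mul_sum, ← Finset.sum_neg_distrib]
    refine Finset.sum_congr rfl fun jj _ => ?_
    rw [show 1+2*jj = 2*jj+1 by ring, show 1+(2*jj+1) = (2*jj+1)+1 by ring,
      pair_eq r (2*jj+1) hr]
    have o1 : (-1:ℝ)^(2*jj+1) = -1 := Odd.neg_one_pow ⟨jj, by ring⟩
    have e1 : (-1:ℝ)^(r*(2*jj+1+1)) = 1 := Even.neg_one_pow ⟨r*(jj+1), by ring⟩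
    rw [o1, e1, show r*(2*jj+1+1) = 2*(jj+1)*r by ring, show r*(2*jj+1+2) = (2*(jj+1)+1)*r by ring]
    have p1 : (0:ℝ) < Nat.fib (2*(jj+1)*r) := fib_real_pos (Nat.mul_pos (by omega) hr)
    have p2 : (0:ℝ) < Nat.fib ((2*(jj+1)+1)*r) := fib_real_pos (Nat.mul_pos (by omega) hr)
    field_simp
  -- final algebra
  have hne : (Nat.fib (r*k):ℝ) ≠ 0 := ne_of_gt (fib_real_pos (Nat.mul_pos hr hk))
  rw [hAval] at main
  field_simp
  linear_combination main
end

section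
/- Let (u_n)_{n≥1} be an increasing sequence of positive integers such that u_n ≡ n (mod 2) for every n ≥ 1. Then ∑_{n=1}^∞ 1 / (F_{u_n} · Φ^{u_n}) = ∑_{n=1}^∞ F_{u_{2n} − u_{2n-1}} / (F_{u_{2n}} · F_{u_{2n-1}}). -/
open Filter Finset Topology

open goldenRatio in
lemma key_binet (n d : ℕ) (hd : Odd d) :
    (Nat.fib d : ℝ) * Phi ^ (2 * n + d) =
      (Nat.fib (n + d) : ℝ) * Phi ^ (n + d) + (Nat.fib n : ℝ) * Phi ^ n := by
  have hPhi : Phi = Real.goldenRatio := rfl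
  have hCD : Real.goldenRatio ^ d * Real.goldenConj ^ d = -1 := by
    rw [← mul_pow, Real.goldenRatio_mul_goldenConj, hd.neg_one_pow]
  rw [hPhi, Real.coe_fib_eq, Real.coe_fib_eq, Real.coe_fib_eq]
  linear_combination ((Real.goldenRatio ^ n * Real.goldenConj ^ n
      - Real.goldenRatio ^ n * Real.goldenRatio ^ n) / Real.sqrt 5) * hCD

lemma key_frac (a b : ℕ) (ha : 1 ≤ a) (hab : a < b) (hodd : Odd (b - a)) :
    (Nat.fib (b - a) : ℝ) / ((Nat.fib b : ℝ) * (Nat.fib a : ℝ)) =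
      1 / ((Nat.fib a : ℝ) * Phi ^ a) + 1 / ((Nat.fib b : ℝ) * Phi ^ b) := by
  have hfa : 0 < (Nat.fib a : ℝ) := by exact_mod_cast Nat.fib_pos.2 ha
  have hfb : 0 < (Nat.fib b : ℝ) := by exact_mod_cast Nat.fib_pos.2 (ha.trans hab.le)
  have hP : (0:ℝ) < Phi := by
    have : (0:ℝ) < Real.sqrt 5 := by positivity
    unfold Phi; linarith
  have key := key_binet a (b - a) hodd
  rw [Nat.add_sub_cancel' hab.le] at key
  have h2 : 2 * a + (b - a) = a + b := by omega
  rw [h2] at key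
  have hPa : (0:ℝ) < Phi ^ a := pow_pos hP a
  have hPb : (0:ℝ) < Phi ^ b := pow_pos hP b
  rw [div_add_div _ _ (by positivity) (by positivity),
    div_eq_div_iff (by positivity) (by positivity)]
  linear_combination ((Nat.fib a : ℝ) * (Nat.fib b : ℝ)) * key

set_option maxHeartbeats 1000000 in
/-- Let `(u_n)_{n≥1}` be an increasing sequence of positive integers
with `u_n ≡ n (mod 2)` for all `n ≥ 1`. Then
`∑_{n=1}^∞ 1 / (F_{u_n} Φ^{u_n})
= ∑_{n=1}^∞ F_{u_{2n} - u_{2n-1}} / (F_{u_{2n}} F_{u_{2n-1}})`. -/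
theorem statement16 (u : ℕ → ℕ) (hupos : ∀ n, 1 ≤ n → 1 ≤ u n)
    (humono : ∀ n, 1 ≤ n → u n < u (n + 1))
    (hparity : ∀ n, 1 ≤ n → u n ≡ n [MOD 2]) :
    ∑' n : ℕ, 1 / ((Nat.fib (u (n + 1)) : ℝ) * Phi ^ (u (n + 1))) =
      ∑' n : ℕ, (Nat.fib (u (2 * n + 2) - u (2 * n + 1)) : ℝ) /
        ((Nat.fib (u (2 * n + 2)) : ℝ) * (Nat.fib (u (2 * n + 1)) : ℝ)) := by
  have hP1 : (1:ℝ) < Phi := Real.one_lt_goldenRatio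
  have hPpos : (0:ℝ) < Phi := by linarith
  set a : ℕ → ℝ := fun n => 1 / ((Nat.fib (u (n + 1)) : ℝ) * Phi ^ (u (n + 1))) with ha
  have hun : ∀ n, 1 ≤ n → n ≤ u n := by
    intro n
    induction n with
    | zero => intro h; omega
    | succ k ih =>
      intro _
      rcases Nat.eq_zero_or_pos k with hk | hk
      · subst hk; exact hupos 1 le_rfl
      · have := humono k hk
        have := ih hk
        omega
  have hbound : ∀ n : ℕ, Phi ^ (n + 1) ≤ (Nat.fib (u (n + 1)) : ℝ) * Phi ^ (u (n + 1)) := by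
    intro n
    have h1 : 1 ≤ u (n + 1) := hupos _ (by omega)
    have hfib : (1:ℝ) ≤ (Nat.fib (u (n + 1)) : ℝ) := by
      exact_mod_cast Nat.fib_pos.2 h1
    have hpow : Phi ^ (n + 1) ≤ Phi ^ (u (n + 1)) :=
      pow_le_pow_right₀ hP1.le (hun (n + 1) (by omega))
    calc Phi ^ (n + 1) ≤ Phi ^ (u (n + 1)) := hpow
      _ = 1 * Phi ^ (u (n + 1)) := (one_mul _).symm
      _ ≤ (Nat.fib (u (n + 1)) : ℝ) * Phi ^ (u (n + 1)) :=
          mul_le_mul_of_nonneg_right hfib (by positivity)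
  -- summability of a
  have hnn : ∀ n, 0 ≤ a n := by
    intro n
    show (0:ℝ) ≤ 1 / ((Nat.fib (u (n + 1)) : ℝ) * Phi ^ (u (n + 1)))
    exact div_nonneg zero_le_one
      (mul_nonneg (Nat.cast_nonneg _) (pow_nonneg hPpos.le _))
  have hsum : Summable a := by
    apply Summable.of_nonneg_of_le (f := fun n => Phi⁻¹ ^ (n + 1)) hnn
    · intro n
      calc a n = 1 / ((Nat.fib (u (n + 1)) : ℝ) * Phi ^ (u (n + 1))) := rfl
        _ ≤ 1 / Phi ^ (n + 1) :=
            one_div_le_one_div_of_le (pow_pos hPpos _) (hbound n)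
        _ = Phi⁻¹ ^ (n + 1) := by rw [one_div, inv_pow]
    · exact (summable_geometric_of_lt_one (inv_nonneg.2 hPpos.le)
        (inv_lt_one_of_one_lt₀ hP1)).comp_injective (add_left_injective 1)
  have hsum_even : Summable fun k => a (2 * k) :=
    hsum.comp_injective (fun x y h => by omega)
  have hsum_odd : Summable fun k => a (2 * k + 1) :=
    hsum.comp_injective (fun x y h => by omega)
  have hterm : ∀ n : ℕ, (Nat.fib (u (2 * n + 2) - u (2 * n + 1)) : ℝ) /
        ((Nat.fib (u (2 * n + 2)) : ℝ) * (Nat.fib (u (2 * n + 1)) : ℝ)) =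
        a (2 * n) + a (2 * n + 1) := by
    intro n
    have h1 : 1 ≤ u (2 * n + 1) := hupos _ (by omega)
    have h2 : u (2 * n + 1) < u (2 * n + 2) := humono (2 * n + 1) (by omega)
    have hodd : Odd (u (2 * n + 2) - u (2 * n + 1)) := by
      have p1 := hparity (2 * n + 1) (by omega)
      have p2 := hparity (2 * n + 2) (by omega)
      unfold Nat.ModEq at p1 p2
      rcases Nat.even_or_odd (u (2 * n + 2) - u (2 * n + 1)) with he | ho
      · exfalso
        rcases he with ⟨k, hk⟩
        omega
      · exact ho
    have h := key_frac (u (2 * n + 1)) (u (2 * n + 2)) h1 h2 hodd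
    have e1 : a (2 * n) = 1 / ((Nat.fib (u (2 * n + 1)) : ℝ) * Phi ^ (u (2 * n + 1))) := by
      rw [ha]
    have e2 : a (2 * n + 1) = 1 / ((Nat.fib (u (2 * n + 2)) : ℝ) * Phi ^ (u (2 * n + 2))) := by
      rw [ha]
    rw [e1, e2, h]
  rw [tsum_congr hterm, Summable.tsum_add hsum_even hsum_odd,
    tsum_even_add_odd hsum_even hsum_odd]
end

section
/- ∑_{n=1}^∞ |√5 − L_n/F_n| = 2 · ∑_{n=1}^∞ 1/(F_n · Φ^n) = 2 · ∑_{n=1}^∞ 1/(F_{2n} · F_{2n-1}). -/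
open Filter Finset Topology

noncomputable def Psi : ℝ := (1 - Real.sqrt 5) / 2

lemma sqrt5_sq : Real.sqrt 5 ^ 2 = 5 := Real.sq_sqrt (by norm_num)

lemma sqrt5_gt_two : Real.sqrt 5 > 2 := by
  nlinarith [sqrt5_sq, Real.sqrt_nonneg 5]

lemma Phi_gt_one : 1 < Phi := by unfold Phi; nlinarith [sqrt5_gt_two]

lemma Phi_pos : 0 < Phi := lt_trans one_pos Phi_gt_one

lemma Psi_mul_Phi : Psi * Phi = -1 := by
  unfold Psi Phi; nlinarith [sqrt5_sq]

lemma abs_Psi : |Psi| = Phi⁻¹ := by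
  have h : Psi = -Phi⁻¹ := by
    calc Psi = Psi * Phi * Phi⁻¹ := by
          rw [mul_assoc, mul_inv_cancel₀ Phi_pos.ne', mul_one]
      _ = -Phi⁻¹ := by rw [Psi_mul_Phi]; ring
  rw [h, abs_neg, abs_inv, abs_of_pos Phi_pos]

lemma Psi_sq : Psi ^ 2 = Psi + 1 := by unfold Psi; nlinarith [sqrt5_sq]

lemma Phi_sq : Phi ^ 2 = Phi + 1 := by unfold Phi; nlinarith [sqrt5_sq]

lemma key_s17 : ∀ n : ℕ, Real.sqrt 5 * (Nat.fib n : ℝ) - (lucas n : ℝ) = -2 * Psi ^ n := by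
  intro n
  induction n using Nat.twoStepInduction with
  | zero => simp [lucas]
  | one => simp [lucas, Psi]; ring
  | more n ih1 ih2 =>
    have hf : (Nat.fib (n + 2) : ℝ) = Nat.fib n + Nat.fib (n + 1) := by
      rw [Nat.fib_add_two]; push_cast; ring
    have hl : (lucas (n + 2) : ℝ) = lucas n + lucas (n + 1) := by
      show ((lucas n + lucas (n+1) : ℕ) : ℝ) = _; push_cast; ring
    have hp : Psi ^ (n + 2) = Psi ^ n + Psi ^ (n + 1) := by
      have := Psi_sq
      calc Psi ^ (n + 2) = Psi ^ n * Psi ^ 2 := by ring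
        _ = Psi ^ n + Psi ^ (n + 1) := by rw [Psi_sq]; ring
    rw [hf, hl, hp]; linarith [ih1, ih2]

lemma phi_pow : ∀ n : ℕ, Phi ^ (n + 1) = (Nat.fib (n + 1) : ℝ) * Phi + (Nat.fib n : ℝ) := by
  intro n
  induction n with
  | zero => simp
  | succ k ih =>
    have : Phi ^ (k + 2) = Phi ^ (k + 1) * Phi := by ring
    rw [this, ih, Nat.fib_add_two]
    push_cast
    nlinarith [Phi_sq]

lemma fib_pos_real (n : ℕ) : (0 : ℝ) < (Nat.fib (n + 1) : ℝ) := by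
  exact_mod_cast Nat.fib_pos.mpr (Nat.succ_pos n)

lemma fib_ge_one (n : ℕ) : (1 : ℝ) ≤ (Nat.fib (n + 1) : ℝ) := by
  exact_mod_cast Nat.fib_pos.mpr (Nat.succ_pos n)

noncomputable def a (n : ℕ) : ℝ := 1 / ((Nat.fib (n + 1) : ℝ) * Phi ^ (n + 1))

lemma summable_a : Summable a := by
  have hg : Summable (fun n : ℕ => Phi⁻¹ ^ (n + 1)) := by
    have := summable_geometric_of_lt_one (r := Phi⁻¹) (inv_nonneg.mpr Phi_pos.le)
      (inv_lt_one_of_one_lt₀ Phi_gt_one)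
    exact this.comp_injective (add_left_injective 1)
  refine Summable.of_nonneg_of_le (fun n => ?_) (fun n => ?_) hg
  · unfold a
    exact div_nonneg zero_le_one
      (mul_nonneg (Nat.cast_nonneg _) (pow_nonneg Phi_pos.le _))
  · unfold a
    rw [inv_pow, ← one_div]
    apply one_div_le_one_div_of_le (pow_pos Phi_pos _)
    exact le_mul_of_one_le_left (pow_pos Phi_pos _).le (fib_ge_one n)

lemma term_eq_s17 (n : ℕ) :
    |Real.sqrt 5 - (lucas (n + 1) : ℝ) / (Nat.fib (n + 1) : ℝ)| = 2 * a n := by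
  have hF := fib_pos_real n
  have : Real.sqrt 5 - (lucas (n + 1) : ℝ) / (Nat.fib (n + 1) : ℝ) =
      (Real.sqrt 5 * (Nat.fib (n + 1) : ℝ) - (lucas (n + 1) : ℝ)) / (Nat.fib (n + 1) : ℝ) := by
    field_simp
  rw [this, key_s17 (n + 1), abs_div, abs_of_pos hF]
  rw [show (-2 : ℝ) * Psi ^ (n + 1) = -(2 * Psi ^ (n + 1)) by ring, abs_neg,
    abs_mul, abs_pow, abs_Psi, abs_of_nonneg (by norm_num : (0:ℝ) ≤ 2)]
  unfold a
  rw [inv_pow]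
  field_simp

lemma pair_eq_s17 (n : ℕ) :
    a (2 * n) + a (2 * n + 1) = 1 / ((Nat.fib (2 * n + 2) : ℝ) * (Nat.fib (2 * n + 1) : ℝ)) := by
  have h1 := fib_pos_real (2 * n)
  have h2 : (0:ℝ) < (Nat.fib (2 * n + 2) : ℝ) := fib_pos_real (2 * n + 1)
  have hP := Phi_pos
  have hpow : Phi ^ (2 * n + 2) = (Nat.fib (2 * n + 2) : ℝ) * Phi + (Nat.fib (2 * n + 1) : ℝ) :=
    phi_pow (2 * n + 1)
  unfold a
  have e : 2 * n + 1 + 1 = 2 * n + 2 := rfl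
  rw [e]
  have d1 : (0:ℝ) < (Nat.fib (2 * n + 1) : ℝ) * Phi ^ (2 * n + 1) :=
    mul_pos h1 (pow_pos hP _)
  have d2 : (0:ℝ) < (Nat.fib (2 * n + 2) : ℝ) * Phi ^ (2 * n + 2) :=
    mul_pos h2 (pow_pos hP _)
  rw [div_add_div _ _ d1.ne' d2.ne', div_eq_div_iff (mul_pos d1 d2).ne' (mul_pos h2 h1).ne']
  linear_combination
    (-(((Nat.fib (2 * n + 2)) : ℝ) * ((Nat.fib (2 * n + 1)) : ℝ) * Phi ^ (2 * n + 1))) * hpow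

/-- `∑_{n=1}^∞ |√5 - L_n/F_n| = 2 ∑_{n=1}^∞ 1/(F_n Φ^n) = 2 ∑_{n=1}^∞ 1/(F_{2n} F_{2n-1})`. -/
theorem statement17 :
    (∑' n : ℕ, |Real.sqrt 5 - (lucas (n + 1) : ℝ) / (Nat.fib (n + 1) : ℝ)| =
      2 * ∑' n : ℕ, 1 / ((Nat.fib (n + 1) : ℝ) * Phi ^ (n + 1))) ∧
    (2 * ∑' n : ℕ, 1 / ((Nat.fib (n + 1) : ℝ) * Phi ^ (n + 1)) =
      2 * ∑' n : ℕ, 1 / ((Nat.fib (2 * n + 2) : ℝ) * (Nat.fib (2 * n + 1) : ℝ))) := by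
  constructor
  · rw [← tsum_mul_left]
    exact tsum_congr term_eq_s17
  · congr 1
    have he : Summable (fun k => a (2 * k)) :=
      summable_a.comp_injective (fun x y h => by omega)
    have ho : Summable (fun k => a (2 * k + 1)) :=
      summable_a.comp_injective (fun x y h => by omega)
    calc (∑' n : ℕ, a n) = (∑' k, a (2 * k)) + ∑' k, a (2 * k + 1) :=
          (tsum_even_add_odd he ho).symm
      _ = ∑' k, (a (2 * k) + a (2 * k + 1)) := (Summable.tsum_add he ho).symm
      _ = ∑' n : ℕ, 1 / ((Nat.fib (2 * n + 2) : ℝ) * (Nat.fib (2 * n + 1) : ℝ)) :=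
          tsum_congr pair_eq_s17
end

section
/- ∑_{n=1}^∞ |√5 − L_{3n}/F_{3n}| = 2 · ∑_{n=1}^∞ 1/(F_{3n} · Φ^{3n}) = 4 · ∑_{n=1}^∞ 1/(F_{6n} · F_{6n-3}). -/
open Filter Finset Topology

open Real goldenRatio in
lemma lucas_eq : ∀ n : ℕ, (lucas n : ℝ) = φ ^ n + ψ ^ n
  | 0 => by norm_num [lucas]
  | 1 => by simp [lucas]
  | n + 2 => by
      have h1 := lucas_eq n
      have h2 := lucas_eq (n + 1)
      have hφ : (φ:ℝ) ^ (n + 2) = φ ^ n * (φ + 1) := by rw [← goldenRatio_sq]; ring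
      have hψ : (ψ:ℝ) ^ (n + 2) = ψ ^ n * (ψ + 1) := by rw [← goldenConj_sq]; ring
      have : (lucas (n + 2) : ℝ) = (lucas n : ℝ) + (lucas (n + 1) : ℝ) := by
        rw [lucas]; push_cast; ring
      rw [this, h1, h2, hφ, hψ, pow_succ, pow_succ]; ring

open Real goldenRatio in
lemma fib_sqrt5 (n : ℕ) : Real.sqrt 5 * (Nat.fib n : ℝ) = φ ^ n - ψ ^ n := by
  have h5 : Real.sqrt 5 ≠ 0 := by positivity
  rw [Real.coe_fib_eq]; field_simp

lemma fib_pos' (n : ℕ) (h : 0 < n) : (0:ℝ) < (Nat.fib n : ℝ) := by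
  exact_mod_cast Nat.fib_pos.mpr h

open Real goldenRatio in
lemma psi_eq : (ψ:ℝ) = -φ⁻¹ := by have := inv_goldenRatio; linarith

open Real goldenRatio in
lemma term1 (m : ℕ) (hm : 0 < m) :
    |Real.sqrt 5 - (lucas m : ℝ) / (Nat.fib m : ℝ)| =
      2 * (1 / ((Nat.fib m : ℝ) * Phi ^ m)) := by
  have hF : (0:ℝ) < (Nat.fib m : ℝ) := fib_pos' m hm
  have hFne : (Nat.fib m : ℝ) ≠ 0 := ne_of_gt hF
  have key : Real.sqrt 5 - (lucas m : ℝ) / (Nat.fib m : ℝ) = (-2 * ψ ^ m) / (Nat.fib m : ℝ) := by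
    rw [lucas_eq, eq_div_iff hFne, sub_mul, div_mul_cancel₀ _ hFne]
    have := fib_sqrt5 m
    linarith
  rw [key, abs_div, abs_of_pos hF, abs_mul, abs_neg, abs_pow, abs_of_neg goldenConj_neg,
    psi_eq, neg_neg, inv_pow]
  have hφ : (0:ℝ) < φ ^ m := pow_pos goldenRatio_pos m
  rw [show Phi = φ from rfl]
  rw [abs_of_pos (by norm_num : (0:ℝ) < 2)]
  field_simp

open Real goldenRatio in
lemma inv_pow_phi (m : ℕ) : (φ:ℝ)⁻¹ ^ m = (-1) ^ m * ψ ^ m := by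
  rw [inv_goldenRatio, neg_pow]

open Real goldenRatio in
lemma cube_diff : (φ:ℝ) ^ 3 - ψ ^ 3 = 2 * Real.sqrt 5 := by
  have h1 : (φ:ℝ) ^ 3 = 2 * φ + 1 := by
    have := goldenRatio_sq
    nlinarith [this]
  have h2 : (ψ:ℝ) ^ 3 = 2 * ψ + 1 := by
    have := goldenConj_sq
    nlinarith [this]
  rw [h1, h2]
  have := goldenRatio_sub_goldenConj
  linarith

lemma alg_key_s18 (x y : ℝ) (n : ℕ) (h : x ^ n * y ^ n = -1) :
    -y ^ n * (x ^ (n + 3) - y ^ (n + 3)) + y ^ (n + 3) * (x ^ n - y ^ n) = x ^ 3 - y ^ 3 := by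
  rw [pow_add, pow_add]
  linear_combination (y ^ 3 - x ^ 3) * h

open Real goldenRatio in
lemma pair_key (a : ℕ) (hodd : Odd a) :
    -ψ ^ a * (φ ^ (a + 3) - ψ ^ (a + 3)) + ψ ^ (a + 3) * (φ ^ a - ψ ^ a)
      = 2 * Real.sqrt 5 := by
  have hφψ : (φ:ℝ) ^ a * ψ ^ a = -1 := by
    rw [← mul_pow, goldenRatio_mul_goldenConj]; exact hodd.neg_one_pow
  rw [alg_key_s18 φ ψ a hφψ, cube_diff]

open Real goldenRatio in
lemma term2 (k : ℕ) :
    1 / ((Nat.fib (6 * k + 3) : ℝ) * Phi ^ (6 * k + 3)) +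
      1 / ((Nat.fib (6 * k + 6) : ℝ) * Phi ^ (6 * k + 6)) =
    2 * (1 / ((Nat.fib (6 * k + 6) : ℝ) * (Nat.fib (6 * k + 3) : ℝ))) := by
  have hFa : (0:ℝ) < (Nat.fib (6 * k + 3) : ℝ) := fib_pos' _ (by omega)
  have hFb : (0:ℝ) < (Nat.fib (6 * k + 6) : ℝ) := fib_pos' _ (by omega)
  have h5 : (0:ℝ) < Real.sqrt 5 := by positivity
  have hodd : Odd (6 * k + 3) := ⟨3 * k + 1, by omega⟩
  have hinva : ((φ:ℝ) ^ (6 * k + 3))⁻¹ = -ψ ^ (6 * k + 3) := by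
    rw [← inv_pow, inv_pow_phi, hodd.neg_one_pow]; ring
  have hinvb : ((φ:ℝ) ^ (6 * k + 6))⁻¹ = ψ ^ (6 * k + 6) := by
    rw [← inv_pow, inv_pow_phi, show (6 * k + 6) = 2 * (3 * k + 3) by ring, pow_mul]
    norm_num
  have ha := fib_sqrt5 (6 * k + 3)
  have hb := fib_sqrt5 (6 * k + 6)
  have key : -ψ ^ (6 * k + 3) * (Nat.fib (6 * k + 6) : ℝ)
      + ψ ^ (6 * k + 6) * (Nat.fib (6 * k + 3) : ℝ) = 2 := by
    have hpk := pair_key (6 * k + 3) hodd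
    have h63 : 6 * k + 3 + 3 = 6 * k + 6 := by omega
    rw [h63] at hpk
    have h5ne : Real.sqrt 5 ≠ 0 := ne_of_gt h5
    have : Real.sqrt 5 * (-ψ ^ (6 * k + 3) * (Nat.fib (6 * k + 6) : ℝ)
        + ψ ^ (6 * k + 6) * (Nat.fib (6 * k + 3) : ℝ)) = Real.sqrt 5 * 2 := by
      linear_combination (-ψ ^ (6 * k + 3)) * hb + ψ ^ (6 * k + 6) * ha + hpk
    exact mul_left_cancel₀ h5ne this
  rw [show Phi = φ from rfl]
  have hφa : (0:ℝ) < φ ^ (6 * k + 3) := pow_pos goldenRatio_pos _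
  have hφb : (0:ℝ) < φ ^ (6 * k + 6) := pow_pos goldenRatio_pos _
  have e1 : 1 / ((Nat.fib (6 * k + 3) : ℝ) * φ ^ (6 * k + 3))
      = -ψ ^ (6 * k + 3) / (Nat.fib (6 * k + 3) : ℝ) := by
    rw [one_div, mul_inv, mul_comm, hinva, div_eq_mul_inv]
  have e2 : 1 / ((Nat.fib (6 * k + 6) : ℝ) * φ ^ (6 * k + 6))
      = ψ ^ (6 * k + 6) / (Nat.fib (6 * k + 6) : ℝ) := by
    rw [one_div, mul_inv, mul_comm, hinvb, div_eq_mul_inv]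
  rw [e1, e2, div_add_div _ _ (ne_of_gt hFa) (ne_of_gt hFb), mul_one_div,
    div_eq_div_iff (ne_of_gt (mul_pos hFa hFb)) (ne_of_gt (mul_pos hFb hFa))]
  linear_combination ((Nat.fib (6 * k + 3) : ℝ) * (Nat.fib (6 * k + 6) : ℝ)) * key

open Real goldenRatio in
lemma summable_f : Summable (fun n : ℕ => 1 / ((Nat.fib (3 * (n + 1)) : ℝ) * Phi ^ (3 * (n + 1)))) := by
  have hg : Summable (fun n : ℕ => (φ⁻¹ : ℝ) ^ n) := by
    exact summable_geometric_of_lt_one (le_of_lt (inv_pos.mpr goldenRatio_pos))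
      (inv_lt_one_of_one_lt₀ one_lt_goldenRatio)
  have hPhi : ∀ m : ℕ, (0:ℝ) < Phi ^ m := fun m => pow_pos goldenRatio_pos m
  refine Summable.of_nonneg_of_le
    (fun n => le_of_lt (one_div_pos.mpr (mul_pos (fib_pos' _ (by omega)) (hPhi _))))
    (fun n => ?_) hg
  have hF : (1:ℝ) ≤ (Nat.fib (3 * (n + 1)) : ℝ) := by
    exact_mod_cast Nat.fib_pos.mpr (by omega)
  have hφn : (0:ℝ) < φ ^ n := pow_pos goldenRatio_pos n
  have hmono : (φ:ℝ) ^ n ≤ φ ^ (3 * (n + 1)) :=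
    pow_le_pow_right₀ (le_of_lt one_lt_goldenRatio) (by omega)
  have hden : (φ:ℝ) ^ n ≤ (Nat.fib (3 * (n + 1)) : ℝ) * φ ^ (3 * (n + 1)) := by
    calc (φ:ℝ) ^ n ≤ φ ^ (3 * (n + 1)) := hmono
      _ ≤ (Nat.fib (3 * (n + 1)) : ℝ) * φ ^ (3 * (n + 1)) := by
          nlinarith [pow_pos goldenRatio_pos (3 * (n + 1))]
  rw [show Phi = φ from rfl]
  calc 1 / ((Nat.fib (3 * (n + 1)) : ℝ) * φ ^ (3 * (n + 1))) ≤ 1 / (φ ^ n) :=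
        one_div_le_one_div_of_le hφn hden
    _ = φ⁻¹ ^ n := by rw [one_div, inv_pow]

/-- `∑_{n=1}^∞ |√5 - L_{3n}/F_{3n}| = 2 ∑_{n=1}^∞ 1/(F_{3n} Φ^{3n})
= 4 ∑_{n=1}^∞ 1/(F_{6n} F_{6n-3})`. -/
theorem statement18 :
    (∑' n : ℕ, |Real.sqrt 5 - (lucas (3 * (n + 1)) : ℝ) / (Nat.fib (3 * (n + 1)) : ℝ)| =
      2 * ∑' n : ℕ, 1 / ((Nat.fib (3 * (n + 1)) : ℝ) * Phi ^ (3 * (n + 1)))) ∧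
    (2 * ∑' n : ℕ, 1 / ((Nat.fib (3 * (n + 1)) : ℝ) * Phi ^ (3 * (n + 1))) =
      4 * ∑' n : ℕ, 1 / ((Nat.fib (6 * (n + 1)) : ℝ) * (Nat.fib (6 * (n + 1) - 3) : ℝ))) := by
  constructor
  · rw [← tsum_mul_left]
    exact tsum_congr fun n => term1 (3 * (n + 1)) (by omega)
  · set f : ℕ → ℝ := fun n => 1 / ((Nat.fib (3 * (n + 1)) : ℝ) * Phi ^ (3 * (n + 1))) with hf
    have hsum := summable_f
    have he : Summable (fun k => f (2 * k)) := hsum.comp_injective (fun a b => by omega)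
    have ho : Summable (fun k => f (2 * k + 1)) := hsum.comp_injective (fun a b => by omega)
    have split : (∑' k, f (2 * k)) + (∑' k, f (2 * k + 1)) = ∑' n, f n :=
      tsum_even_add_odd he ho
    have combine : (∑' k, f (2 * k)) + (∑' k, f (2 * k + 1)) = ∑' k, (f (2 * k) + f (2 * k + 1)) :=
      (Summable.tsum_add he ho).symm
    have pairwise : ∀ k : ℕ, f (2 * k) + f (2 * k + 1) =
        2 * (1 / ((Nat.fib (6 * (k + 1)) : ℝ) * (Nat.fib (6 * (k + 1) - 3) : ℝ))) := by
      intro k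
      have h := term2 k
      have e1 : 3 * (2 * k + 1) = 6 * k + 3 := by ring
      have e2 : 3 * (2 * k + 1 + 1) = 6 * k + 6 := by ring
      have e3 : 6 * (k + 1) = 6 * k + 6 := by ring
      have e4 : 6 * (k + 1) - 3 = 6 * k + 3 := by omega
      simp only [hf, e1, e2, e3, e4]
      exact h
    rw [← split, combine, tsum_congr pairwise, tsum_mul_left]
    ring
end
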